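/- arXiv:1005.3178 — 3 statements merged into one kernel-verified Lean document; each statement's English description precedes it below -/
import Mathlib

section
/- (i) For every morphism (π,f) : (A,j)_K → (B,i)_P of nets of C*-algebras there exists a morphism (π̄,f) : (Ā,j̄)_K → (B̄,ī)_P between the corresponding enveloping net bundles satisfying (π̄,f) ∘ ε = ε̃ ∘ (π,f), where ε and ε̃ are the canonical embeddings of (A,j)_K and (B,i)_P into their enveloping net bundles; moreover, if (π,f) is faithful on the fibres and (B,i)_P is injective, then (A,j)_K is injective. (ii) The assignment (A,j)_K ↦ (Ā,j̄)_K, (π,f) ↦ (π̄,f) is functorial: it preserves identities and compositions of morphisms. -/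
noncomputable section

universe u v w u' v' w' u'' v'' w''

namespace AQFT

/-! ### Simplices and paths in a poset -/

structure Simplex1 (K : Type u) [PartialOrder K] : Type u where
  supp : K
  d0 : K
  d1 : K
  le0 : d0 ≤ supp
  le1 : d1 ≤ supp

namespace Simplex1

variable {K : Type u} [PartialOrder K]

def op (s : Simplex1 K) : Simplex1 K := ⟨s.supp, s.d1, s.d0, s.le1, s.le0⟩

def deg (a : K) : Simplex1 K := ⟨a, a, a, le_rfl, le_rfl⟩

def map {L : Type u'} [PartialOrder L] (f : K →o L) (s : Simplex1 K) : Simplex1 L :=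
  ⟨f s.supp, f s.d0, f s.d1, f.monotone s.le0, f.monotone s.le1⟩

end Simplex1

structure Simplex2 (K : Type u) [PartialOrder K] : Type u where
  supp : K
  d0 : Simplex1 K
  d1 : Simplex1 K
  d2 : Simplex1 K
  le0 : d0.supp ≤ supp
  le1 : d1.supp ≤ supp
  le2 : d2.supp ≤ supp
  h00 : d0.d0 = d1.d0
  h11 : d1.d1 = d2.d1
  h10 : d0.d1 = d2.d0

inductive SPath (K : Type u) [PartialOrder K] : K → K → Type u
  | nil (a : K) : SPath K a a
  | cons {a b c : K} (p : SPath K a b) (s : Simplex1 K) (h1 : s.d1 = b) (h0 : s.d0 = c) :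
      SPath K a c

namespace SPath

variable {K : Type u} [PartialOrder K]

/-- The path consisting of a single 1-simplex. -/
def single {a b : K} (s : Simplex1 K) (h1 : s.d1 = a) (h0 : s.d0 = b) : SPath K a b :=
  .cons (.nil a) s h1 h0

/-- Composition of paths: first traverse `p`, then `q`. -/
def comp {a b : K} (p : SPath K a b) : {c : K} → SPath K b c → SPath K a c
  | _, .nil _ => p
  | _, .cons q s h1 h0 => .cons (p.comp q) s h1 h0

/-- The opposite (reverse) of a path. -/
def reverse {a : K} : {b : K} → SPath K a b → SPath K b a
  | _, .nil _ => .nil a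
  | _, .cons p s h1 h0 => (single s.op h0 h1).comp p.reverse

@[simp] theorem comp_nil {a b : K} (p : SPath K a b) : p.comp (.nil b) = p := rfl

@[simp] theorem nil_comp {a b : K} (p : SPath K a b) : (SPath.nil a).comp p = p := by
  induction p with
  | nil => rfl
  | cons p s h1 h0 ih =>
      show SPath.cons ((SPath.nil _).comp p) s h1 h0 = _
      rw [ih]

theorem comp_assoc {a b c d : K} (p : SPath K a b) (q : SPath K b c) (r : SPath K c d) :
    (p.comp q).comp r = p.comp (q.comp r) := by
  induction r with
  | nil => rfl
  | cons r s h1 h0 ih =>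
      show SPath.cons ((p.comp q).comp r) s h1 h0 = SPath.cons (p.comp (q.comp r)) s h1 h0
      rw [ih]

/-- All 1-simplices of the path have support `≤ o`. -/
def SuppLE (o : K) {a : K} : {b : K} → SPath K a b → Prop
  | _, .nil _ => True
  | _, .cons p s _ _ => SuppLE o p ∧ s.supp ≤ o

/-- All supports and faces of the path belong to `P`. -/
def MemAll (P : Set K) {a : K} : {b : K} → SPath K a b → Prop
  | _, .nil _ => True
  | _, .cons p s _ _ => MemAll P p ∧ s.supp ∈ P ∧ s.d0 ∈ P ∧ s.d1 ∈ P

theorem SuppLE.comp {o : K} {a b c : K} {p : SPath K a b} {q : SPath K b c}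
    (hp : SuppLE o p) (hq : SuppLE o q) : SuppLE o (p.comp q) := by
  induction q with
  | nil => exact hp
  | cons q s h1 h0 ih => exact ⟨ih hq.1, hq.2⟩

theorem SuppLE.reverse {o : K} {a b : K} {p : SPath K a b} (hp : SuppLE o p) :
    SuppLE o p.reverse := by
  induction p with
  | nil => trivial
  | cons p s h1 h0 ih => exact SuppLE.comp ⟨trivial, hp.2⟩ (ih hp.1)

/-- Mapping paths along a monotone map. -/
def map {L : Type u'} [PartialOrder L] (f : K →o L) {a : K} :
    {b : K} → SPath K a b → SPath L (f a) (f b)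
  | _, .nil _ => .nil (f a)
  | _, .cons p s h1 h0 => .cons (map f p) (s.map f) (congrArg f h1) (congrArg f h0)

/-- The path of the nerve 1-simplex associated with an inclusion `o ≤ a`. -/
def nervePath {o a : K} (h : o ≤ a) : SPath K o a :=
  single ⟨a, a, o, le_rfl, h⟩ rfl rfl

/-! ### Homotopy of paths -/

inductive Homotopic : {a b : K} → SPath K a b → SPath K a b → Prop
  | refl {a b : K} (p : SPath K a b) : Homotopic p p
  | symm {a b : K} {p q : SPath K a b} : Homotopic p q → Homotopic q p
  | trans {a b : K} {p q r : SPath K a b} : Homotopic p q → Homotopic q r → Homotopic p r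
  | comp_congr {a b c : K} {p p' : SPath K a b} {q q' : SPath K b c} :
      Homotopic p p' → Homotopic q q' → Homotopic (p.comp q) (p'.comp q')
  | degen {a : K} (s : Simplex1 K) (h0 : s.d0 = a) (h1 : s.d1 = a) (hs : s.supp = a) :
      Homotopic (SPath.nil a) (single s h1 h0)
  | triangle {a b : K} (c : Simplex2 K) (h1 : c.d2.d1 = a) (h0 : c.d0.d0 = b) :
      Homotopic ((single c.d2 h1 rfl).comp (single c.d0 c.h10 h0))
        (single c.d1 (c.h11.trans h1) (c.h00.symm.trans h0))

theorem single_comp_op {a b : K} (s : Simplex1 K) (h1 : s.d1 = a) (h0 : s.d0 = b) :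
    Homotopic ((single s h1 h0).comp (single s.op h0 h1)) (SPath.nil a) := by
  subst h1; subst h0
  have ht := Homotopic.triangle
    (⟨s.supp, s.op, Simplex1.deg s.d1, s, le_rfl, s.le1, le_rfl, rfl, rfl, rfl⟩ : Simplex2 K)
    rfl rfl
  have hd := Homotopic.degen (K := K) (Simplex1.deg s.d1) rfl rfl rfl
  exact ht.trans hd.symm

theorem comp_reverse_self {a b : K} (p : SPath K a b) :
    Homotopic (p.comp p.reverse) (SPath.nil a) := by
  induction p with
  | nil => exact .refl _
  | cons p s h1 h0 ih =>
      show Homotopic ((p.comp (single s h1 h0)).comp ((single s.op h0 h1).comp p.reverse)) _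
      rw [comp_assoc, ← comp_assoc (single s h1 h0)]
      have h2 : Homotopic (((single s h1 h0).comp (single s.op h0 h1)).comp p.reverse)
          p.reverse := by
        have h3 := Homotopic.comp_congr (single_comp_op s h1 h0) (Homotopic.refl p.reverse)
        rwa [nil_comp] at h3
      exact (Homotopic.comp_congr (Homotopic.refl p) h2).trans ih

theorem reverse_comp_self {a b : K} (p : SPath K a b) :
    Homotopic (p.reverse.comp p) (SPath.nil b) := by
  induction p with
  | nil => exact .refl _
  | cons p s h1 h0 ih =>
      show Homotopic (((single s.op h0 h1).comp p.reverse).comp (p.comp (single s h1 h0))) _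
      rw [comp_assoc, ← comp_assoc p.reverse]
      have h2 : Homotopic ((p.reverse.comp p).comp (single s h1 h0)) (single s h1 h0) := by
        have h3 := Homotopic.comp_congr ih (Homotopic.refl (single s h1 h0))
        rwa [nil_comp] at h3
      have h4 : Homotopic ((single s.op h0 h1).comp ((p.reverse.comp p).comp (single s h1 h0)))
          ((single s.op h0 h1).comp (single s h1 h0)) :=
        Homotopic.comp_congr (Homotopic.refl _) h2
      exact h4.trans (single_comp_op s.op h0 h1)

theorem Homotopic.reverse_congr {a b : K} {p q : SPath K a b} (h : Homotopic p q) :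
    Homotopic p.reverse q.reverse := by
  have e1 : Homotopic p.reverse (p.reverse.comp (q.comp q.reverse)) :=
    Homotopic.comp_congr (Homotopic.refl p.reverse) (comp_reverse_self q).symm
  have e2 : Homotopic (p.reverse.comp (q.comp q.reverse)) ((p.reverse.comp p).comp q.reverse) := by
    rw [comp_assoc]
    exact Homotopic.comp_congr (Homotopic.refl _)
      (Homotopic.comp_congr h.symm (Homotopic.refl _))
  have e3 : Homotopic ((p.reverse.comp p).comp q.reverse) q.reverse := by
    have h3 := Homotopic.comp_congr (reverse_comp_self p) (Homotopic.refl q.reverse)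
    rwa [nil_comp] at h3
  exact (e1.trans e2).trans e3

end SPath

/-! ### The fundamental group of a poset -/

instance homotopySetoid (K : Type u) [PartialOrder K] (o : K) : Setoid (SPath K o o) where
  r := SPath.Homotopic
  iseqv := ⟨fun p => .refl p, fun h => h.symm, fun h h' => h.trans h'⟩

def Pi1 (K : Type u) [PartialOrder K] (o : K) : Type u := Quotient (homotopySetoid K o)

namespace Pi1

variable {K : Type u} [PartialOrder K] {o : K}

def mk (p : SPath K o o) : Pi1 K o := Quotient.mk _ p

instance : One (Pi1 K o) := ⟨mk (SPath.nil o)⟩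

instance : Mul (Pi1 K o) :=
  ⟨Quotient.map₂ (fun p q => q.comp p)
    (fun _ _ hp _ _ hq => SPath.Homotopic.comp_congr hq hp)⟩

instance : Inv (Pi1 K o) :=
  ⟨Quotient.map SPath.reverse (fun _ _ h => h.reverse_congr)⟩

instance : Group (Pi1 K o) where
  mul_assoc x y z := by
    refine Quotient.inductionOn₃ x y z ?_
    intro p q r
    show mk (r.comp (q.comp p)) = mk ((r.comp q).comp p)
    rw [SPath.comp_assoc]
  one_mul x := Quotient.inductionOn x fun p => rfl
  mul_one x := Quotient.inductionOn x fun p => congrArg mk (SPath.nil_comp p)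
  inv_mul_cancel x := Quotient.inductionOn x fun p => Quotient.sound (SPath.comp_reverse_self p)

end Pi1

/-! ### Nets of C*-algebras over a poset -/

open scoped ComplexOrder

variable {K : Type u} [PartialOrder K]

structure CStarNet (K : Type u) [PartialOrder K] where
  fib : K → Type v
  [cstar : ∀ o, CStarAlgebra (fib o)]
  incl : ∀ ⦃a o : K⦄, a ≤ o → (fib a →⋆ₐ[ℂ] fib o)
  incl_injective : ∀ ⦃a o : K⦄ (h : a ≤ o), Function.Injective (incl h)
  incl_comp : ∀ ⦃e a o : K⦄ (h1 : e ≤ a) (h2 : a ≤ o) (x : fib e),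
      incl h2 (incl h1 x) = incl (h1.trans h2) x

attribute [instance] CStarNet.cstar

/-- A C*-net bundle: all the inclusion maps are isomorphisms. -/
def IsCStarNetBundle (N : CStarNet.{u, v} K) : Prop :=
  ∀ ⦃a o : K⦄ (h : a ≤ o), Function.Bijective (N.incl h)

/-- Morphisms of nets over (possibly) different posets, over the poset map `f`. -/
def IsNetMorphism {K : Type u} {S : Type u'} [PartialOrder K] [PartialOrder S]
    (N : CStarNet.{u, v} K) (M : CStarNet.{u', v'} S) (f : K →o S)
    (φ : ∀ o : K, N.fib o →⋆ₐ[ℂ] M.fib (f o)) : Prop :=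
  ∀ ⦃a o : K⦄ (h : a ≤ o) (x : N.fib a), φ o (N.incl h x) = M.incl (f.monotone h) (φ a x)

/-- Morphisms of nets over the same poset (over the identity of the poset). -/
def IsNetMorphismOver (N : CStarNet.{u, v} K) (M : CStarNet.{u, v'} K)
    (φ : ∀ o : K, N.fib o →⋆ₐ[ℂ] M.fib o) : Prop :=
  ∀ ⦃a o : K⦄ (h : a ≤ o) (x : N.fib a), φ o (N.incl h x) = M.incl h (φ a x)

namespace CStarNet

def fibCast (N : CStarNet.{u, v} K) {a b : K} (h : a = b) : N.fib a ≃⋆ₐ[ℂ] N.fib b := by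
  subst h; exact StarAlgEquiv.refl ℂ _

/-- The isomorphism determined by an inclusion map of a C*-net bundle. -/
def holEquiv (N : CStarNet.{u, v} K) (hN : IsCStarNetBundle N) ⦃a o : K⦄ (h : a ≤ o) :
    N.fib a ≃⋆ₐ[ℂ] N.fib o :=
  StarAlgEquiv.ofBijective (N.incl h) (hN h)

/-- The 1-cocycle `j_b` associated with a 1-simplex `b` of the poset. -/
def hol1 (N : CStarNet.{u, v} K) (hN : IsCStarNetBundle N) (s : Simplex1 K) :
    N.fib s.d1 ≃⋆ₐ[ℂ] N.fib s.d0 :=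
  (N.holEquiv hN s.le1).trans (N.holEquiv hN s.le0).symm

/-- The extension `j_p` of the 1-cocycle from 1-simplices to paths. -/
def holPath (N : CStarNet.{u, v} K) (hN : IsCStarNetBundle N) {a : K} :
    {b : K} → SPath K a b → (N.fib a ≃⋆ₐ[ℂ] N.fib b)
  | _, .nil _ => StarAlgEquiv.refl ℂ _
  | _, .cons p s h1 h0 =>
      (holPath N hN p).trans (((N.fibCast h1.symm).trans (N.hol1 hN s)).trans (N.fibCast h0))

end CStarNet

/-- A net is trivial if it is isomorphic to a constant net bundle. -/
def IsTrivialNet (N : CStarNet.{u, v} K) : Prop :=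
  ∀ o₀ : K, ∃ τ : ∀ a, N.fib a ≃⋆ₐ[ℂ] N.fib o₀,
    ∀ ⦃a o : K⦄ (h : a ≤ o) (x : N.fib a), τ o (N.incl h x) = τ a x

/-- `(NB, ε)` is an enveloping net bundle of the net `N`. -/
def IsEnvelope (N : CStarNet.{u, v} K) (NB : CStarNet.{u, max u v} K)
    (ε : ∀ o, N.fib o →⋆ₐ[ℂ] NB.fib o) : Prop :=
  IsCStarNetBundle NB ∧ IsNetMorphismOver N NB ε ∧
    ∀ (M : CStarNet.{u, max u v} K), IsCStarNetBundle M →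
      ∀ ψ : ∀ o, N.fib o →⋆ₐ[ℂ] M.fib o, IsNetMorphismOver N M ψ →
        ∃! ψu : ∀ o, NB.fib o →⋆ₐ[ℂ] M.fib o,
          IsNetMorphismOver NB M ψu ∧ ∀ o x, ψu o (ε o x) = ψ o x

/-- The net `N` is nondegenerate w.r.t. the enveloping net bundle `NB`. -/
def IsNondegenerate (NB : CStarNet.{u, v'} K) : Prop :=
  ∀ o : K, Nontrivial (NB.fib o)

/-! ### States -/

/-- A state on a unital C*-algebra. -/
structure CStarAlgState (A : Type v) [CStarAlgebra A] where
  lin : A →ₗ[ℂ] ℂ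
  map_one : lin 1 = 1
  pos : ∀ a : A, 0 ≤ lin (star a * a)

/-- A state on a net of C*-algebras. -/
structure NetState (N : CStarNet.{u, v} K) where
  st : ∀ o, CStarAlgState (N.fib o)
  compat : ∀ ⦃o a : K⦄ (h : o ≤ a) (x : N.fib o), (st a).lin (N.incl h x) = (st o).lin x

/-! ### Representations -/

structure NetRep (N : CStarNet.{u, v} K) where
  H : K → Type w
  [nacg : ∀ o, NormedAddCommGroup (H o)]
  [ips : ∀ o, InnerProductSpace ℂ (H o)]
  [cpl : ∀ o, CompleteSpace (H o)]
  rep : ∀ o, N.fib o →⋆ₐ[ℂ] (H o →L[ℂ] H o)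
  U : ∀ ⦃o a : K⦄, o ≤ a → (H o ≃ₗᵢ[ℂ] H a)
  intertwine : ∀ ⦃o a : K⦄ (h : o ≤ a) (x : N.fib o) (v : H o),
      U h (rep o x v) = rep a (N.incl h x) (U h v)
  U_comp : ∀ ⦃o a e : K⦄ (h1 : o ≤ a) (h2 : a ≤ e) (v : H o),
      U h2 (U h1 v) = U (h1.trans h2) v

attribute [instance] NetRep.nacg NetRep.ips NetRep.cpl

namespace NetRep

variable {N : CStarNet.{u, v} K}

def hCast (R : NetRep.{u, v, w} N) {a b : K} (h : a = b) : R.H a ≃ₗᵢ[ℂ] R.H b := by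
  subst h; exact LinearIsometryEquiv.refl ℂ _

/-- The unitary `U_b` associated with a 1-simplex `b`. -/
def U1 (R : NetRep.{u, v, w} N) (s : Simplex1 K) : R.H s.d1 ≃ₗᵢ[ℂ] R.H s.d0 :=
  (R.U s.le1).trans (R.U s.le0).symm

/-- The unitary `U_p` associated with a path `p`. -/
def Upath (R : NetRep.{u, v, w} N) {a : K} : {b : K} → SPath K a b → (R.H a ≃ₗᵢ[ℂ] R.H b)
  | _, .nil _ => LinearIsometryEquiv.refl ℂ _
  | _, .cons p s h1 h0 =>
      (Upath R p).trans (((R.hCast h1.symm).trans (R.U1 s)).trans (R.hCast h0))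

/-- A representation is faithful if all the `π_o` are injective. -/
def Faithful (R : NetRep.{u, v, w} N) : Prop := ∀ o, Function.Injective (R.rep o)

/-- A representation vanishes if all the `π_o` are zero. -/
def Vanishes (R : NetRep.{u, v, w} N) : Prop := ∀ (o) (x : N.fib o), R.rep o x = 0

/-- Quasi (topologically) trivial representation: the loop unitaries commute with the
representation of the corresponding fibre. -/
def QuasiTrivial (R : NetRep.{u, v, w} N) : Prop :=
  ∀ (o : K) (p : SPath K o o) (x : N.fib o) (v : R.H o),
    R.Upath p (R.rep o x v) = R.rep o x (R.Upath p v)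

/-- Unitary equivalence of representations. -/
def Equiv (R : NetRep.{u, v, w} N) (R' : NetRep.{u, v, w'} N) : Prop :=
  ∃ T : ∀ o, R.H o ≃ₗᵢ[ℂ] R'.H o,
    (∀ (o) (x : N.fib o) (v : R.H o), T o (R.rep o x v) = R'.rep o x (T o v)) ∧
    (∀ ⦃o a : K⦄ (h : o ≤ a) (v : R.H o), T a (R.U h v) = R'.U h (T o v))

end NetRep

/-- The representation of `N` obtained by composing a representation of `NB` with
a morphism `ε : N → NB` of nets over `K`. -/
def NetRep.ofEnvelope {N : CStarNet.{u, v} K} {NB : CStarNet.{u, v'} K}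
    (ε : ∀ o, N.fib o →⋆ₐ[ℂ] NB.fib o) (hε : IsNetMorphismOver N NB ε)
    (R : NetRep.{u, v', w} NB) : NetRep.{u, v, w} N where
  H := R.H
  rep o := (R.rep o).comp (ε o)
  U := R.U
  intertwine := by
    intro o a h x v
    show R.U h (R.rep o (ε o x) v) = R.rep a (ε a (N.incl h x)) (R.U h v)
    rw [hε h x]
    exact R.intertwine h (ε o x) v
  U_comp := R.U_comp

/-- Covariant representations of the holonomy dynamical system of a C*-net bundle,
with the action of the fundamental group presented at the level of loops. -/
structure CovRep (N : CStarNet.{u, v} K) (hN : IsCStarNetBundle N) (o : K) where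
  H : Type w
  [nacg : NormedAddCommGroup H]
  [ips : InnerProductSpace ℂ H]
  [cpl : CompleteSpace H]
  eta : N.fib o →⋆ₐ[ℂ] (H →L[ℂ] H)
  V : SPath K o o → (H ≃ₗᵢ[ℂ] H)
  V_hom : ∀ p q : SPath K o o, SPath.Homotopic p q → V p = V q
  V_mul : ∀ p q : SPath K o o, V (p.comp q) = (V p).trans (V q)
  cov : ∀ (p : SPath K o o) (x : N.fib o) (v : H),
      eta (N.holPath hN p x) (V p v) = V p (eta x v)

attribute [instance] CovRep.nacg CovRep.ips CovRep.cpl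

/-- Equivalence of covariant representations. -/
def CovRep.Equiv {N : CStarNet.{u, v} K} {hN : IsCStarNetBundle N} {o : K}
    (C : CovRep.{u, v, w} N hN o) (C' : CovRep.{u, v, w'} N hN o) : Prop :=
  ∃ W : C.H ≃ₗᵢ[ℂ] C'.H,
    (∀ (x : N.fib o) (v : C.H), W (C.eta x v) = C'.eta x (W v)) ∧
    (∀ (p : SPath K o o) (v : C.H), W (C.V p v) = C'.V p (W v))

/-- A representation of a single C*-algebra on a Hilbert space. -/
structure AlgRep (A : Type v) [CStarAlgebra A] where
  H : Type w
  [nacg : NormedAddCommGroup H]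
  [ips : InnerProductSpace ℂ H]
  [cpl : CompleteSpace H]
  rho : A →⋆ₐ[ℂ] (H →L[ℂ] H)

attribute [instance] AlgRep.nacg AlgRep.ips AlgRep.cpl

/-- A Hilbert space representation (on a single Hilbert space) of the restriction of
a net of C*-algebras to a subset `P` of the poset. -/
structure SubNetHSRep (N : CStarNet.{u, v} K) (P : Set K) where
  H : Type w
  [nacg : NormedAddCommGroup H]
  [ips : InnerProductSpace ℂ H]
  [cpl : CompleteSpace H]
  rep : ∀ o ∈ P, N.fib o →⋆ₐ[ℂ] (H →L[ℂ] H)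
  compat : ∀ ⦃a o : K⦄ (ha : a ∈ P) (ho : o ∈ P) (h : a ≤ o) (x : N.fib a),
      rep o ho (N.incl h x) = rep a ha x

attribute [instance] SubNetHSRep.nacg SubNetHSRep.ips SubNetHSRep.cpl

/-! ### Amenability -/

/-- The space `ℓ∞(G)` of bounded real-valued functions on `G`. -/
def BddFuns (G : Type w) : Submodule ℝ (G → ℝ) where
  carrier := {f | ∃ C, ∀ g, |f g| ≤ C}
  add_mem' := by
    rintro f g ⟨C, hC⟩ ⟨D, hD⟩
    exact ⟨C + D, fun x => (abs_add_le _ _).trans (add_le_add (hC x) (hD x))⟩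
  zero_mem' := ⟨0, by simp⟩
  smul_mem' := by
    rintro c f ⟨C, hC⟩
    refine ⟨|c| * C, fun x => ?_⟩
    have : |c • f x| = |c| * |f x| := by simp [abs_mul]
    calc |(c • f) x| = |c| * |f x| := by simpa using this
      _ ≤ |c| * C := mul_le_mul_of_nonneg_left (hC x) (abs_nonneg c)

def BddFuns.const (G : Type w) (r : ℝ) : BddFuns G :=
  ⟨fun _ => r, ⟨|r|, fun _ => le_rfl⟩⟩

def BddFuns.rtrans {G : Type w} [Group G] (f : BddFuns G) (h : G) : BddFuns G :=
  ⟨fun g => (f : G → ℝ) (g * h), by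
    obtain ⟨C, hC⟩ := f.2
    exact ⟨C, fun g => hC (g * h)⟩⟩

/-- A right invariant mean on `ℓ∞(G)`. -/
structure RightInvariantMean (G : Type w) [Group G] where
  mean : BddFuns G →ₗ[ℝ] ℝ
  nonneg : ∀ f : BddFuns G, (∀ g, 0 ≤ (f : G → ℝ) g) → 0 ≤ mean f
  normalized : mean (BddFuns.const G 1) = 1
  rightInv : ∀ (f : BddFuns G) (h : G), mean (BddFuns.rtrans f h) = mean f

/-- Amenability of a (discrete) group. -/
def IsAmenable (G : Type w) [Group G] : Prop := Nonempty (RightInvariantMean G)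

/-! ### Covariant nets -/

/-- A `G`-covariant structure on a net of C*-algebras, where `G` acts on the poset `K`
by order preserving bijections. -/
structure CovariantNet {G : Type w} [Group G] [MulAction G K]
    (hord : ∀ (g : G) (a b : K), a ≤ b → g • a ≤ g • b) (N : CStarNet.{u, v} K) where
  act : ∀ (g : G) (o : K), N.fib o ≃⋆ₐ[ℂ] N.fib (g • o)
  act_mul : ∀ (g h : G) (o : K) (x : N.fib o),
      N.fibCast (mul_smul h g o) (act (h * g) o x) = act h (g • o) (act g o x)
  act_incl : ∀ (g : G) ⦃a o : K⦄ (hao : a ≤ o) (x : N.fib a),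
      act g o (N.incl hao x) = N.incl (hord g a o hao) (act g a x)

/-- A `G`-invariant state of a `G`-covariant net. -/
def NetState.Invariant {G : Type w} [Group G] [MulAction G K]
    {hord : ∀ (g : G) (a b : K), a ≤ b → g • a ≤ g • b} {N : CStarNet.{u, v} K}
    (α : CovariantNet hord N) (ω : NetState N) : Prop :=
  ∀ (g : G) (o : K) (x : N.fib o), (ω.st (g • o)).lin (α.act g o x) = (ω.st o).lin x

/-! ### The generalized Čech cocycle -/

/-- A 1-simplex of the simplicial set `Σ°_*(K)`: two vertices and a nonempty support
`F` lying below both of them. -/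
structure CechSimplex1 (K : Type u) [PartialOrder K] : Type u where
  F : Set K
  hne : F.Nonempty
  src : K
  tgt : K
  hsrc : ∀ a ∈ F, a ≤ src
  htgt : ∀ a ∈ F, a ≤ tgt

def CechSimplex1.swap (s : CechSimplex1 K) : CechSimplex1 K :=
  ⟨s.F, s.hne, s.tgt, s.src, s.htgt, s.hsrc⟩

/-- `A^F_o`: the C*-subalgebra of the fibre over `o` generated by the images of the
fibres over the elements of `F`. -/
def CStarNet.fibGen (N : CStarNet.{u, v} K) (F : Set K) (o : K) (hF : ∀ a ∈ F, a ≤ o) :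
    StarSubalgebra ℂ (N.fib o) :=
  (StarAlgebra.adjoin ℂ (⋃ a, ⋃ h : a ∈ F, Set.range (N.incl (hF a h)))).topologicalClosure

theorem CStarNet.mem_fibGen (N : CStarNet.{u, v} K) {F : Set K} {o : K}
    (hF : ∀ a ∈ F, a ≤ o) {a : K} (ha : a ∈ F) (x : N.fib a) :
    N.incl (hF a ha) x ∈ N.fibGen F o hF :=
  StarSubalgebra.le_topologicalClosure _
    (StarAlgebra.subset_adjoin ℂ _
      (Set.mem_iUnion.2 ⟨a, Set.mem_iUnion.2 ⟨ha, Set.mem_range_self x⟩⟩))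

/-- A generalized Čech cocycle of the net `N` defined over the collection `D` of
1-simplices of `Σ°_*(K)`. -/
structure CechCocycle (N : CStarNet.{u, v} K) (D : Set (CechSimplex1 K)) where
  zeta : ∀ s ∈ D, (N.fibGen s.F s.src s.hsrc ≃⋆ₐ[ℂ] N.fibGen s.F s.tgt s.htgt)
  compat : ∀ (s : CechSimplex1 K) (hs : s ∈ D) ⦃a : K⦄ (ha : a ∈ s.F) (x : N.fib a),
      (zeta s hs ⟨N.incl (s.hsrc a ha) x, N.mem_fibGen s.hsrc ha x⟩ : N.fib s.tgt)
        = N.incl (s.htgt a ha) x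

/-- The domain of the Čech cocycle of a net: the union of all the domains over which
a Čech cocycle of the net exists. -/
def CechDomain (N : CStarNet.{u, v} K) : Set (CechSimplex1 K) :=
  {s | ∃ D : Set (CechSimplex1 K), Nonempty (CechCocycle N D) ∧ s ∈ D}


/-- A representation of a C*-net bundle and a covariant representation of its holonomy
dynamical system correspond to each other. -/
def MatchesCov {N : CStarNet.{u, v} K} {hN : IsCStarNetBundle N} {o : K}
    (R : NetRep.{u, v, w} N) (C : CovRep.{u, v, w'} N hN o) : Prop :=
  ∃ W : R.H o ≃ₗᵢ[ℂ] C.H,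
    (∀ (x : N.fib o) (v : R.H o), W (R.rep o x v) = C.eta x (W v)) ∧
    (∀ (p : SPath K o o) (v : R.H o), W (R.Upath p v) = C.V p (W v))


variable {β : Type v} [CStarAlgebra β] [Small.{w} β]

instance : Star (Shrink.{w} β) := ⟨fun x => equivShrink β (star ((equivShrink β).symm x))⟩

@[simp] lemma shrink_symm_star (x : Shrink.{w} β) :
    (equivShrink β).symm (star x) = star ((equivShrink β).symm x) := by
  show (equivShrink β).symm (equivShrink β _) = _
  simp

@[simp] lemma shrink_symm_mul (x y : Shrink.{w} β) :
    (equivShrink β).symm (x * y) = (equivShrink β).symm x * (equivShrink β).symm y :=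
  map_mul ((Shrink.algEquiv ℂ β).symm).symm x y

@[simp] lemma shrink_symm_add (x y : Shrink.{w} β) :
    (equivShrink β).symm (x + y) = (equivShrink β).symm x + (equivShrink β).symm y :=
  map_add ((Shrink.algEquiv ℂ β).symm).symm x y

@[simp] lemma shrink_symm_sub (x y : Shrink.{w} β) :
    (equivShrink β).symm (x - y) = (equivShrink β).symm x - (equivShrink β).symm y :=
  map_sub ((Shrink.algEquiv ℂ β).symm).symm.toAlgHom.toRingHom x y

@[simp] lemma shrink_symm_smul (c : ℂ) (x : Shrink.{w} β) :
    (equivShrink β).symm (c • x) = c • (equivShrink β).symm x :=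
  map_smul ((Shrink.algEquiv ℂ β).symm).symm c x

noncomputable instance : NormedRing (Shrink.{w} β) :=
  NormedRing.induced _ _ (((Shrink.algEquiv ℂ β).symm).symm : Shrink.{w} β →ₐ[ℂ] β).toRingHom
    ((Shrink.algEquiv ℂ β).symm).symm.injective

@[simp] lemma shrink_norm (x : Shrink.{w} β) : ‖x‖ = ‖(equivShrink β).symm x‖ := rfl

instance : StarRing (Shrink.{w} β) where
  star_involutive x := (equivShrink β).symm.injective <| by simp
  star_add x y := (equivShrink β).symm.injective <| by simp [star_add]
  star_mul x y := (equivShrink β).symm.injective <| by simp [star_mul]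

instance : StarModule ℂ (Shrink.{w} β) where
  star_smul c x := (equivShrink β).symm.injective <| by simp [star_smul]

noncomputable instance : NormedAlgebra ℂ (Shrink.{w} β) where
  norm_smul_le c x := by
    rw [shrink_norm, shrink_symm_smul]
    exact norm_smul_le c _

instance : CStarRing (Shrink.{w} β) where
  norm_mul_self_le x := by
    rw [shrink_norm, shrink_norm, shrink_symm_mul, shrink_symm_star]
    exact (CStarRing.norm_star_mul_self (x := (equivShrink β).symm x)).symm.le

def shrinkIsometryEquiv : Shrink.{w} β ≃ᵢ β where
  toEquiv := (equivShrink β).symm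
  isometry_toFun := Isometry.of_dist_eq fun x y => by
    show dist ((equivShrink β).symm x) ((equivShrink β).symm y) = dist x y
    rw [dist_eq_norm, ← shrink_symm_sub, ← shrink_norm]
    exact (dist_eq_norm x y).symm

instance : CompleteSpace (Shrink.{w} β) := (shrinkIsometryEquiv (β := β)).completeSpace

noncomputable instance Shrink.cstarAlgebra : CStarAlgebra (Shrink.{w} β) :=
  { (inferInstance : NormedRing (Shrink.{w} β)),
    (inferInstance : StarRing (Shrink.{w} β)),
    (inferInstance : CStarRing (Shrink.{w} β)),
    (inferInstance : NormedAlgebra ℂ (Shrink.{w} β)),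
    (inferInstance : StarModule ℂ (Shrink.{w} β)),
    (inferInstance : CompleteSpace (Shrink.{w} β)) with }

noncomputable def starAlgEquivShrink : β ≃⋆ₐ[ℂ] Shrink.{w} β where
  toFun := (Shrink.algEquiv ℂ β).symm
  invFun := ((Shrink.algEquiv ℂ β).symm).symm
  left_inv := ((Shrink.algEquiv ℂ β).symm).left_inv
  right_inv := ((Shrink.algEquiv ℂ β).symm).right_inv
  map_mul' := map_mul ((Shrink.algEquiv ℂ β).symm)
  map_add' := map_add ((Shrink.algEquiv ℂ β).symm)
  map_smul' := map_smul ((Shrink.algEquiv ℂ β).symm)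
  map_star' x := (equivShrink β).symm.injective <| by
    show (equivShrink β).symm ((equivShrink β) (star x)) = (equivShrink β).symm (star ((equivShrink β) x))
    simp

instance small_closure_metric {X : Type u} [MetricSpace X] (s : Set X) [Small.{w} s] :
    Small.{w} (closure s) := by
  classical
  rcases s.eq_empty_or_nonempty with hs | hs
  · subst hs; simp only [closure_empty]
    exact small_subsingleton _
  · obtain ⟨x₀, hx₀⟩ := hs
    have hx₀' : x₀ ∈ closure s := subset_closure hx₀
    refine small_of_surjective (α := ℕ → s)
      (f := fun u => if h : ∃ y : X, y ∈ closure s ∧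
          Filter.Tendsto (fun n => ((u n : X))) Filter.atTop (nhds y)
        then ⟨h.choose, h.choose_spec.1⟩ else ⟨x₀, hx₀'⟩) ?_
    rintro ⟨y, hy⟩
    obtain ⟨u, hu, hlim⟩ := mem_closure_iff_seq_limit.mp hy
    refine ⟨fun n => ⟨u n, hu n⟩, ?_⟩
    have hex : ∃ z : X, z ∈ closure s ∧
        Filter.Tendsto (fun n => u n) Filter.atTop (nhds z) := ⟨y, hy, hlim⟩
    simp only [hex, dif_pos]
    exact Subtype.ext (tendsto_nhds_unique hex.choose_spec.2 hlim)

instance small_freeAlgebra {X : Type u} [Small.{w} X] : Small.{w} (FreeAlgebra ℂ X) := by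
  have e := FreeAlgebra.equivMonoidAlgebraFreeMonoid (R := ℂ) (X := X)
  have : Small.{w} (MonoidAlgebra ℂ (FreeMonoid X)) := by
    have : Small.{w} (FreeMonoid X) := inferInstanceAs (Small.{w} (List X))
    have h2 : Small.{w} (FreeMonoid X →₀ ℂ) :=
      small_of_injective (f := fun (f : FreeMonoid X →₀ ℂ) =>
        (f : FreeMonoid X → ℂ)) DFunLike.coe_injective
    exact small_of_injective (f := MonoidAlgebra.coeff) (fun a b h => by cases a; cases b; congr)
  exact small_of_injective e.injective

instance small_adjoin {A : Type u} [Semiring A] [Algebra ℂ A] (s : Set A) [Small.{w} s] :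
    Small.{w} (Algebra.adjoin ℂ s) := by
  refine small_of_surjective (α := FreeAlgebra ℂ s)
    (f := fun x => ⟨FreeAlgebra.lift ℂ ((↑) : s → A) x, ?_⟩) ?_
  · rw [Algebra.adjoin_eq_range_freeAlgebra_lift]
    exact ⟨x, rfl⟩
  · rintro ⟨y, hy⟩
    rw [Algebra.adjoin_eq_range_freeAlgebra_lift] at hy
    obtain ⟨x, hx⟩ := hy
    exact ⟨x, Subtype.ext hx⟩

instance small_star_set {A : Type u} [InvolutiveStar A] (s : Set A) [Small.{w} s] :
    Small.{w} (star s : Set A) := by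
  refine small_of_surjective (α := s) (f := fun x => ⟨star (x : A), ?_⟩) ?_
  · simp only [Set.mem_star, star_star]; exact x.2
  · rintro ⟨y, hy⟩
    exact ⟨⟨star y, hy⟩, Subtype.ext (star_star y)⟩

instance small_starAdjoin {A : Type u} [Semiring A] [StarRing A] [Algebra ℂ A] [StarModule ℂ A]
    (s : Set A) [Small.{w} s] : Small.{w} (StarAlgebra.adjoin ℂ s) :=
  inferInstanceAs (Small.{w} (Algebra.adjoin ℂ (s ∪ star s)))

/-! ### Holonomy path lemmas -/

namespace CStarNet
variable {K : Type u} [PartialOrder K]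

@[simp] theorem incl_refl (N : CStarNet.{u, v} K) {o : K} (x : N.fib o) :
    N.incl le_rfl x = x :=
  N.incl_injective le_rfl (N.incl_comp le_rfl le_rfl x)

@[simp] theorem fibCast_rfl (N : CStarNet.{u, v} K) {o : K} (x : N.fib o) :
    N.fibCast rfl x = x := rfl

variable (Q : CStarNet.{u, v} K) (hQ : IsCStarNetBundle Q)

@[simp] theorem holEquiv_apply {a o : K} (h : a ≤ o) (x : Q.fib a) :
    Q.holEquiv hQ h x = Q.incl h x := rfl

@[simp] theorem holEquiv_symm_refl {o : K} (x : Q.fib o) :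
    (Q.holEquiv hQ (le_refl o)).symm x = x := by
  conv_lhs => rw [show x = Q.holEquiv hQ (le_refl o) x by simp]
  exact (Q.holEquiv hQ _).symm_apply_apply x

theorem hol1_apply (s : Simplex1 K) (x : Q.fib s.d1) :
    Q.hol1 hQ s x = (Q.holEquiv hQ s.le0).symm (Q.incl s.le1 x) := rfl

theorem hol1_op_hol1 (s : Simplex1 K) (x : Q.fib s.d1) :
    Q.hol1 hQ s.op (Q.hol1 hQ s x) = x := by
  show (Q.holEquiv hQ s.le1).symm (Q.incl s.le0 ((Q.holEquiv hQ s.le0).symm (Q.incl s.le1 x))) = x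
  rw [← holEquiv_apply Q hQ s.le0, (Q.holEquiv hQ s.le0).apply_symm_apply]
  exact (Q.holEquiv hQ s.le1).symm_apply_apply x

theorem hol1_hol1_op (s : Simplex1 K) (x : Q.fib s.d0) :
    Q.hol1 hQ s (Q.hol1 hQ s.op x) = x := by
  show (Q.holEquiv hQ s.le0).symm (Q.incl s.le1 ((Q.holEquiv hQ s.le1).symm (Q.incl s.le0 x))) = x
  rw [← holEquiv_apply Q hQ s.le1, (Q.holEquiv hQ s.le1).apply_symm_apply]
  exact (Q.holEquiv hQ s.le0).symm_apply_apply x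

theorem holPath_comp {a b c : K} (p : SPath K a b) (q : SPath K b c) (x : Q.fib a) :
    Q.holPath hQ (p.comp q) x = Q.holPath hQ q (Q.holPath hQ p x) := by
  induction q with
  | nil => rfl
  | cons q s h1 h0 ih =>
      show (((Q.fibCast h1.symm).trans (Q.hol1 hQ s)).trans (Q.fibCast h0))
          (Q.holPath hQ (p.comp q) x) = _
      rw [ih]
      rfl

theorem holPath_nervePath {a o : K} (h : a ≤ o) (x : Q.fib a) :
    Q.holPath hQ (SPath.nervePath h) x = Q.incl h x := by
  show Q.fibCast rfl (Q.hol1 hQ ⟨o, o, a, le_rfl, h⟩ (Q.fibCast rfl x)) = _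
  rw [fibCast_rfl, fibCast_rfl, hol1_apply]
  exact holEquiv_symm_refl Q hQ _

theorem holPath_reverse_holPath {a b : K} (p : SPath K a b) (x : Q.fib a) :
    Q.holPath hQ p.reverse (Q.holPath hQ p x) = x := by
  induction p with
  | nil => rfl
  | cons p s h1 h0 ih =>
      subst h1; subst h0
      show Q.holPath hQ ((SPath.single s.op rfl rfl).comp p.reverse)
        (Q.holPath hQ (SPath.cons p s rfl rfl) x) = x
      have h2 : Q.holPath hQ (SPath.cons p s rfl rfl) x
          = Q.hol1 hQ s (Q.holPath hQ p x) := rfl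
      refine (congrArg _ h2).trans ((holPath_comp Q hQ _ _ _).trans ?_)
      have h3 : Q.holPath hQ (SPath.single s.op rfl rfl) (Q.hol1 hQ s (Q.holPath hQ p x))
          = Q.hol1 hQ s.op (Q.hol1 hQ s (Q.holPath hQ p x)) := rfl
      refine (congrArg (Q.holPath hQ p.reverse) (h3.trans (hol1_op_hol1 Q hQ s _))).trans ?_
      exact ih

theorem holPath_holPath_reverse {a b : K} (p : SPath K a b) (x : Q.fib b) :
    Q.holPath hQ p (Q.holPath hQ p.reverse x) = x := by
  induction p with
  | nil => rfl
  | cons p s h1 h0 ih =>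
      subst h1; subst h0
      show Q.holPath hQ (SPath.cons p s rfl rfl)
        (Q.holPath hQ ((SPath.single s.op rfl rfl).comp p.reverse) x) = x
      refine (congrArg _ (holPath_comp Q hQ _ _ _)).trans ?_
      have h3 : Q.holPath hQ (SPath.single s.op rfl rfl) x = Q.hol1 hQ s.op x := rfl
      refine (congrArg _ (congrArg (Q.holPath hQ p.reverse) h3)).trans ?_
      have h2 : ∀ y, Q.holPath hQ (SPath.cons p s rfl rfl) y
          = Q.hol1 hQ s (Q.holPath hQ p y) := fun _ => rfl
      rw [h2]
      exact (congrArg (Q.hol1 hQ s) (ih _)).trans (hol1_hol1_op Q hQ s x)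

theorem incl_holPath {a' a o : K} (h : a ≤ o) (p : SPath K a' a) (x : Q.fib a') :
    Q.incl h (Q.holPath hQ p x) = Q.holPath hQ (p.comp (SPath.nervePath h)) x := by
  rw [holPath_comp, holPath_nervePath]

theorem holEquiv_symm_holPath {a' a o : K} (h : a ≤ o) (p : SPath K a' o) (x : Q.fib a') :
    (Q.holEquiv hQ h).symm (Q.holPath hQ p x)
      = Q.holPath hQ (p.comp (SPath.nervePath h).reverse) x := by
  have h4 : Q.incl h (Q.holPath hQ (p.comp (SPath.nervePath h).reverse) x)
      = Q.holPath hQ p x := by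
    rw [incl_holPath, SPath.comp_assoc, holPath_comp,
      holPath_comp Q hQ (SPath.nervePath h).reverse (SPath.nervePath h), holPath_holPath_reverse]
  rw [← h4, ← holEquiv_apply Q hQ h, (Q.holEquiv hQ h).symm_apply_apply]

end CStarNet

/-! ### A `StarAlgHom` out of a `StarAlgEquiv` (unital setting) -/

def starAlgHomOfEquiv {A : Type u'} {B : Type v'} [Semiring A] [Algebra ℂ A] [StarRing A]
    [Semiring B] [Algebra ℂ B] [StarRing B] (e : A ≃⋆ₐ[ℂ] B) : A →⋆ₐ[ℂ] B where
  toFun := e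
  map_one' := map_one e
  map_mul' := map_mul e
  map_zero' := map_zero e
  map_add' := map_add e
  commutes' r := by
    simp only [Algebra.algebraMap_eq_smul_one, map_smul, map_one]
  map_star' := map_star e

@[simp] lemma starAlgHomOfEquiv_apply {A : Type u'} {B : Type v'} [Semiring A] [Algebra ℂ A]
    [StarRing A] [Semiring B] [Algebra ℂ B] [StarRing B] (e : A ≃⋆ₐ[ℂ] B) (x : A) :
    starAlgHomOfEquiv e x = e x := rfl

/-! ### The sub-net-bundle generated by a morphism, shrunk to a small universe -/

section Envelope

variable {K : Type u} [PartialOrder K]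
variable (N : CStarNet.{u, v} K) (Q : CStarNet.{u, w'} K)
  (hQ : IsCStarNetBundle Q) (ψ : ∀ o, N.fib o →⋆ₐ[ℂ] Q.fib o)

def genSet (o : K) : Set (Q.fib o) :=
  Set.range (fun t : (a : K) × (SPath K a o × N.fib a) => Q.holPath hQ t.2.1 (ψ t.1 t.2.2))

def bnd (o : K) : StarSubalgebra ℂ (Q.fib o) :=
  (StarAlgebra.adjoin ℂ (genSet N Q hQ ψ o)).topologicalClosure

theorem gen_subset_bnd (o : K) : genSet N Q hQ ψ o ⊆ (bnd N Q hQ ψ o : Set (Q.fib o)) :=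
  fun _ hx => StarSubalgebra.le_topologicalClosure _ (StarAlgebra.subset_adjoin ℂ _ hx)

theorem psi_mem_bnd (o : K) (x : N.fib o) : ψ o x ∈ bnd N Q hQ ψ o :=
  gen_subset_bnd N Q hQ ψ o ⟨⟨o, SPath.nil o, x⟩, rfl⟩

theorem bnd_map {a o : K} (φ : Q.fib a →⋆ₐ[ℂ] Q.fib o) (hφc : Continuous φ)
    (hgen : ∀ y ∈ genSet N Q hQ ψ a, φ y ∈ genSet N Q hQ ψ o) :
    ∀ {x : Q.fib a}, x ∈ bnd N Q hQ ψ a → φ x ∈ bnd N Q hQ ψ o := by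
  intro x hx
  have h1 : φ '' (StarAlgebra.adjoin ℂ (genSet N Q hQ ψ a) : Set (Q.fib a))
      ⊆ (StarAlgebra.adjoin ℂ (genSet N Q hQ ψ o) : Set (Q.fib o)) := by
    rintro - ⟨z, hz, rfl⟩
    have hz' : φ z ∈ StarSubalgebra.map φ (StarAlgebra.adjoin ℂ (genSet N Q hQ ψ a)) :=
      ⟨z, hz, rfl⟩
    rw [StarAlgHom.map_adjoin] at hz'
    have hsub : ⇑φ '' genSet N Q hQ ψ a
        ⊆ (StarAlgebra.adjoin ℂ (genSet N Q hQ ψ o) : Set (Q.fib o)) := by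
      rintro - ⟨z0, hz0, rfl⟩
      exact StarAlgebra.subset_adjoin ℂ _ (hgen z0 hz0)
    exact StarAlgebra.adjoin_le hsub hz'
  have h2 : φ x ∈ closure (φ '' (StarAlgebra.adjoin ℂ (genSet N Q hQ ψ a) : Set (Q.fib a))) :=
    image_closure_subset_closure_image hφc ⟨x, hx, rfl⟩
  exact closure_mono h1 h2

theorem incl_mem_bnd {a o : K} (h : a ≤ o) {x : Q.fib a} (hx : x ∈ bnd N Q hQ ψ a) :
    Q.incl h x ∈ bnd N Q hQ ψ o := by
  refine bnd_map N Q hQ ψ (Q.incl h)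
    ((NonUnitalStarAlgHom.isometry (Q.incl h) (Q.incl_injective h)).continuous) ?_ hx
  rintro - ⟨⟨a', p, y⟩, rfl⟩
  rw [CStarNet.incl_holPath Q hQ]
  exact ⟨⟨a', p.comp (SPath.nervePath h), y⟩, rfl⟩

theorem holEquivSymm_mem_bnd {a o : K} (h : a ≤ o) {x : Q.fib o} (hx : x ∈ bnd N Q hQ ψ o) :
    (Q.holEquiv hQ h).symm x ∈ bnd N Q hQ ψ a := by
  refine bnd_map N Q hQ ψ (starAlgHomOfEquiv (Q.holEquiv hQ h).symm)
    ((NonUnitalStarAlgHom.isometry (starAlgHomOfEquiv (Q.holEquiv hQ h).symm)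
      (fun u v huv => (Q.holEquiv hQ h).symm.injective huv)).continuous) ?_ hx
  rintro - ⟨⟨a', p, y⟩, rfl⟩
  show (Q.holEquiv hQ h).symm _ ∈ _
  rw [CStarNet.holEquiv_symm_holPath Q hQ]
  exact ⟨⟨a', p.comp (SPath.nervePath h).reverse, y⟩, rfl⟩

theorem bnd_incl_surjOn {a o : K} (h : a ≤ o) {y : Q.fib o} (hy : y ∈ bnd N Q hQ ψ o) :
    ∃ x, x ∈ bnd N Q hQ ψ a ∧ Q.incl h x = y :=
  ⟨(Q.holEquiv hQ h).symm y, holEquivSymm_mem_bnd N Q hQ ψ h hy, by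
    rw [← CStarNet.holEquiv_apply Q hQ]
    exact (Q.holEquiv hQ h).apply_symm_apply y⟩

instance genSet_small (o : K) : Small.{max u v} (genSet N Q hQ ψ o) :=
  inferInstanceAs (Small.{max u v} (Set.range fun t : (a : K) × (SPath K a o × N.fib a) =>
    Q.holPath hQ t.2.1 (ψ t.1 t.2.2)))

instance bnd_small (o : K) : Small.{max u v} (bnd N Q hQ ψ o) := by
  haveI : Small.{max u v} ((StarAlgebra.adjoin ℂ (genSet N Q hQ ψ o) : Set (Q.fib o))) :=
    inferInstanceAs (Small.{max u v} (StarAlgebra.adjoin ℂ (genSet N Q hQ ψ o)))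
  exact inferInstanceAs
    (Small.{max u v} (closure ((StarAlgebra.adjoin ℂ (genSet N Q hQ ψ o) : Set (Q.fib o)))))

instance bnd_isClosed (o : K) : IsClosed ((bnd N Q hQ ψ o : Set (Q.fib o))) :=
  (StarAlgebra.adjoin ℂ (genSet N Q hQ ψ o)).isClosed_topologicalClosure

noncomputable instance bnd_cstar (o : K) : CStarAlgebra (bnd N Q hQ ψ o) :=
  StarSubalgebra.cstarAlgebra _

def smallFib (o : K) : Type (max u v) := Shrink.{max u v} (bnd N Q hQ ψ o)

noncomputable instance smallFib_cstar (o : K) : CStarAlgebra (smallFib N Q hQ ψ o) :=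
  inferInstanceAs (CStarAlgebra (Shrink.{max u v} (bnd N Q hQ ψ o)))

noncomputable def shr (o : K) : (bnd N Q hQ ψ o) ≃⋆ₐ[ℂ] smallFib N Q hQ ψ o :=
  starAlgEquivShrink

noncomputable def inclB {a o : K} (h : a ≤ o) :
    (bnd N Q hQ ψ a) →⋆ₐ[ℂ] (bnd N Q hQ ψ o) :=
  StarAlgHom.codRestrict ((Q.incl h).comp (bnd N Q hQ ψ a).subtype) (bnd N Q hQ ψ o)
    (fun x => incl_mem_bnd N Q hQ ψ h x.2)

@[simp] theorem inclB_coe {a o : K} (h : a ≤ o) (x : bnd N Q hQ ψ a) :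
    (inclB N Q hQ ψ h x : Q.fib o) = Q.incl h (x : Q.fib a) := rfl

theorem inclB_comp {e a o : K} (h1 : e ≤ a) (h2 : a ≤ o) (x : bnd N Q hQ ψ e) :
    inclB N Q hQ ψ h2 (inclB N Q hQ ψ h1 x) = inclB N Q hQ ψ (h1.trans h2) x :=
  Subtype.ext (Q.incl_comp h1 h2 (x : Q.fib e))

noncomputable def smallNet : CStarNet.{u, max u v} K where
  fib := smallFib N Q hQ ψ
  cstar := fun o => inferInstanceAs (CStarAlgebra (smallFib N Q hQ ψ o))
  incl := fun a o h => ((starAlgHomOfEquiv (shr N Q hQ ψ o)).comp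
    (inclB N Q hQ ψ h)).comp (starAlgHomOfEquiv (shr N Q hQ ψ a).symm)
  incl_injective := by
    intro a o h x y hxy
    simp only [StarAlgHom.comp_apply, starAlgHomOfEquiv_apply] at hxy
    have h2 : (inclB N Q hQ ψ h ((shr N Q hQ ψ a).symm x) : Q.fib o)
        = (inclB N Q hQ ψ h ((shr N Q hQ ψ a).symm y) : Q.fib o) :=
      congrArg Subtype.val ((shr N Q hQ ψ o).injective hxy)
    rw [inclB_coe, inclB_coe] at h2
    have h3 := Subtype.ext (Q.incl_injective h h2)
    exact (shr N Q hQ ψ a).symm.injective h3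
  incl_comp := by
    intro e a o h1 h2 x
    simp only [StarAlgHom.comp_apply, starAlgHomOfEquiv_apply,
      StarAlgEquiv.symm_apply_apply, inclB_comp]

theorem smallNet_isBundle : IsCStarNetBundle (smallNet N Q hQ ψ) := by
  intro a o h
  refine ⟨(smallNet N Q hQ ψ).incl_injective h, ?_⟩
  intro y
  obtain ⟨x, hx, hxe⟩ := bnd_incl_surjOn N Q hQ ψ h ((shr N Q hQ ψ o).symm y).2
  refine ⟨(shr N Q hQ ψ a) ⟨x, hx⟩, ?_⟩
  show ((starAlgHomOfEquiv (shr N Q hQ ψ o)).comp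
    ((inclB N Q hQ ψ h).comp (starAlgHomOfEquiv (shr N Q hQ ψ a).symm)))
      ((shr N Q hQ ψ a) ⟨x, hx⟩) = y
  simp only [StarAlgHom.comp_apply, starAlgHomOfEquiv_apply, StarAlgEquiv.symm_apply_apply]
  have h5 : inclB N Q hQ ψ h ⟨x, hx⟩ = (shr N Q hQ ψ o).symm y := Subtype.ext hxe
  rw [h5]
  exact (shr N Q hQ ψ o).apply_symm_apply y

noncomputable def psiSmall (o : K) : N.fib o →⋆ₐ[ℂ] smallFib N Q hQ ψ o :=
  (starAlgHomOfEquiv (shr N Q hQ ψ o)).comp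
    (StarAlgHom.codRestrict (ψ o) (bnd N Q hQ ψ o) (psi_mem_bnd N Q hQ ψ o))

theorem psiSmall_mor (hψ : IsNetMorphismOver N Q ψ) :
    IsNetMorphismOver N (smallNet N Q hQ ψ) (psiSmall N Q hQ ψ) := by
  intro a o h x
  show (starAlgHomOfEquiv (shr N Q hQ ψ o))
      (StarAlgHom.codRestrict (ψ o) (bnd N Q hQ ψ o) (psi_mem_bnd N Q hQ ψ o) (N.incl h x))
    = ((starAlgHomOfEquiv (shr N Q hQ ψ o)).comp
      ((inclB N Q hQ ψ h).comp (starAlgHomOfEquiv (shr N Q hQ ψ a).symm)))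
        ((starAlgHomOfEquiv (shr N Q hQ ψ a))
          (StarAlgHom.codRestrict (ψ a) (bnd N Q hQ ψ a) (psi_mem_bnd N Q hQ ψ a) x))
  simp only [StarAlgHom.comp_apply, starAlgHomOfEquiv_apply, StarAlgEquiv.symm_apply_apply]
  exact congrArg (shr N Q hQ ψ o) (Subtype.ext (hψ h x))

end Envelope

theorem IsEnvelope.lift {K : Type u} [PartialOrder K] {N : CStarNet.{u, v} K}
    {NB : CStarNet.{u, max u v} K} {εN : ∀ o, N.fib o →⋆ₐ[ℂ] NB.fib o}
    (hNB : IsEnvelope N NB εN) (Q : CStarNet.{u, w'} K) (hQ : IsCStarNetBundle Q)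
    (ψ : ∀ o, N.fib o →⋆ₐ[ℂ] Q.fib o) (hψ : IsNetMorphismOver N Q ψ) :
    ∃ Ψ : ∀ o, NB.fib o →⋆ₐ[ℂ] Q.fib o,
      IsNetMorphismOver NB Q Ψ ∧ ∀ o x, Ψ o (εN o x) = ψ o x := by
  obtain ⟨ψu, ⟨humor, hucomp⟩, -⟩ := hNB.2.2 (smallNet N Q hQ ψ) (smallNet_isBundle N Q hQ ψ)
    (psiSmall N Q hQ ψ) (psiSmall_mor N Q hQ ψ hψ)
  refine ⟨fun o => ((bnd N Q hQ ψ o).subtype.comp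
    (starAlgHomOfEquiv (shr N Q hQ ψ o).symm)).comp (ψu o), ?_, ?_⟩
  · intro a o h x
    simp only [StarAlgHom.comp_apply, starAlgHomOfEquiv_apply]
    have e1 : ((bnd N Q hQ ψ o).subtype) ((shr N Q hQ ψ o).symm ((ψu o) ((NB.incl h) x)))
        = ((bnd N Q hQ ψ o).subtype) ((shr N Q hQ ψ o).symm
            ((smallNet N Q hQ ψ).incl h (ψu a x))) :=
      congrArg (fun z => ((bnd N Q hQ ψ o).subtype) ((shr N Q hQ ψ o).symm z)) (humor h x)
    refine e1.trans ?_
    show ((bnd N Q hQ ψ o).subtype)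
        ((shr N Q hQ ψ o).symm ((shr N Q hQ ψ o)
          (inclB N Q hQ ψ h ((shr N Q hQ ψ a).symm (ψu a x))))) = _
    rw [StarAlgEquiv.symm_apply_apply]
    rfl
  · intro o x
    simp only [StarAlgHom.comp_apply, starAlgHomOfEquiv_apply]
    have e1 : ((bnd N Q hQ ψ o).subtype) ((shr N Q hQ ψ o).symm ((ψu o) ((εN o) x)))
        = ((bnd N Q hQ ψ o).subtype) ((shr N Q hQ ψ o).symm (psiSmall N Q hQ ψ o x)) :=
      congrArg (fun z => ((bnd N Q hQ ψ o).subtype) ((shr N Q hQ ψ o).symm z)) (hucomp o x)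
    refine e1.trans ?_
    show ((bnd N Q hQ ψ o).subtype)
        ((shr N Q hQ ψ o).symm ((shr N Q hQ ψ o)
          (StarAlgHom.codRestrict (ψ o) (bnd N Q hQ ψ o) (psi_mem_bnd N Q hQ ψ o) x)))
      = ψ o x
    rw [StarAlgEquiv.symm_apply_apply]
    rfl
/-- functoriality of the enveloping net bundle: every morphism of nets
lifts to a morphism of the enveloping net bundles compatibly with the canonical
embeddings; if the morphism is faithful on the fibres and the target net is injective
then the source net is injective; and the lifting preserves identities and
compositions. -/
theorem statement_6 {K : Type u} {P : Type u'} {S : Type u''}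
    [PartialOrder K] [PartialOrder P] [PartialOrder S]
    (hK : ∀ a b : K, Nonempty (SPath K a b)) (hP : ∀ a b : P, Nonempty (SPath P a b))
    (hS : ∀ a b : S, Nonempty (SPath S a b))
    (N : CStarNet.{u, v} K) (M : CStarNet.{u', v'} P) (L : CStarNet.{u'', v''} S)
    (NB : CStarNet.{u, max u v} K) (εN : ∀ o, N.fib o →⋆ₐ[ℂ] NB.fib o)
    (hNB : IsEnvelope N NB εN)
    (MB : CStarNet.{u', max u' v'} P) (εM : ∀ o, M.fib o →⋆ₐ[ℂ] MB.fib o)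
    (hMB : IsEnvelope M MB εM)
    (LB : CStarNet.{u'', max u'' v''} S) (εL : ∀ o, L.fib o →⋆ₐ[ℂ] LB.fib o)
    (hLB : IsEnvelope L LB εL) :
    -- (i) existence of the lifted morphism, and stability of injectivity
    (∀ (f : K →o P) (π : ∀ o, N.fib o →⋆ₐ[ℂ] M.fib (f o)), IsNetMorphism N M f π →
      (∃ πb : ∀ o, NB.fib o →⋆ₐ[ℂ] MB.fib (f o),
        IsNetMorphism NB MB f πb ∧ ∀ o x, πb o (εN o x) = εM (f o) (π o x)) ∧
      ((∀ o, Function.Injective (π o)) →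
        (IsNondegenerate MB ∧ ∀ o, Function.Injective (εM o)) →
        (IsNondegenerate NB ∧ ∀ o, Function.Injective (εN o)))) ∧
    -- (ii) functoriality: identities are preserved
    (∀ Φ : ∀ o, NB.fib o →⋆ₐ[ℂ] NB.fib o, IsNetMorphismOver NB NB Φ →
      (∀ o x, Φ o (εN o x) = εN o x) → ∀ o y, Φ o y = y) ∧
    -- (ii) functoriality: compositions are preserved
    (∀ (f : K →o P) (π : ∀ o, N.fib o →⋆ₐ[ℂ] M.fib (f o)),
      IsNetMorphism N M f π →
      ∀ (f' : P →o S) (π' : ∀ o', M.fib o' →⋆ₐ[ℂ] L.fib (f' o')),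
        IsNetMorphism M L f' π' →
        ∀ (πb : ∀ o, NB.fib o →⋆ₐ[ℂ] MB.fib (f o)),
          IsNetMorphism NB MB f πb → (∀ o x, πb o (εN o x) = εM (f o) (π o x)) →
          ∀ (πb' : ∀ o', MB.fib o' →⋆ₐ[ℂ] LB.fib (f' o')),
            IsNetMorphism MB LB f' πb' → (∀ o' x, πb' o' (εM o' x) = εL (f' o') (π' o' x)) →
            (∀ ⦃a o : K⦄ (h : a ≤ o) (x : NB.fib a),
               πb' (f o) (πb o (NB.incl h x))
                 = LB.incl (f'.monotone (f.monotone h)) (πb' (f a) (πb a x))) ∧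
            (∀ (o : K) (x : N.fib o),
               πb' (f o) (πb o (εN o x)) = εL (f' (f o)) (π' (f o) (π o x)))) := by
  have main : ∀ (f : K →o P) (π : ∀ o, N.fib o →⋆ₐ[ℂ] M.fib (f o)), IsNetMorphism N M f π →
      ∃ πb : ∀ o, NB.fib o →⋆ₐ[ℂ] MB.fib (f o),
        IsNetMorphism NB MB f πb ∧ ∀ o x, πb o (εN o x) = εM (f o) (π o x) := by
    intro f π hπ
    let Qp : CStarNet.{u, max u' v'} K :=
      { fib := fun o => MB.fib (f o)
        cstar := fun o => inferInstance
        incl := fun a o h => MB.incl (f.monotone h)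
        incl_injective := fun a o h => MB.incl_injective (f.monotone h)
        incl_comp := fun e a o h1 h2 x => MB.incl_comp (f.monotone h1) (f.monotone h2) x }
    have hQb : IsCStarNetBundle Qp := fun a o h => hMB.1 (f.monotone h)
    have hψm : IsNetMorphismOver N Qp (fun o => (εM (f o)).comp (π o)) := by
      intro a o h x
      simp only [StarAlgHom.comp_apply]
      rw [hπ h x]
      exact hMB.2.1 (f.monotone h) (π a x)
    obtain ⟨Ψ, hΨmor, hΨcomp⟩ := IsEnvelope.lift hNB Qp hQb _ hψm
    exact ⟨Ψ, fun a o h x => hΨmor h x, fun o x => hΨcomp o x⟩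
  refine ⟨?_, ?_, ?_⟩
  · intro f π hπ
    obtain ⟨πb, hmor, hcomp⟩ := main f π hπ
    refine ⟨⟨πb, hmor, hcomp⟩, ?_⟩
    rintro hinj ⟨hMBnd, hεMinj⟩
    constructor
    · intro o
      haveI := hMBnd (f o)
      refine nontrivial_of_ne 1 0 fun h10 => ?_
      have h2 : (πb o 1 : MB.fib (f o)) = πb o 0 := by rw [h10]
      rw [map_one, map_zero] at h2
      exact one_ne_zero h2
    · intro o x y hxy
      have h2 : εM (f o) (π o x) = εM (f o) (π o y) := by
        rw [← hcomp, ← hcomp, hxy]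
      exact hinj o (hεMinj (f o) h2)
  · intro Φ hΦmor hΦfix o y
    obtain ⟨ψu, -, huniq⟩ := hNB.2.2 NB hNB.1 εN hNB.2.1
    have hΦ := huniq Φ ⟨hΦmor, hΦfix⟩
    have hid := huniq (fun o => StarAlgHom.id ℂ (NB.fib o))
      ⟨fun a o h x => rfl, fun o x => rfl⟩
    have h1 : Φ = fun o => StarAlgHom.id ℂ (NB.fib o) := hΦ.trans hid.symm
    rw [h1]
    rfl
  · intro f π hπ f' π' hπ' πb hπb hπbe πb' hπb' hπb'e
    constructor
    · intro a o h x
      rw [hπb h x]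
      exact hπb' (f.monotone h) (πb a x)
    · intro o x
      rw [hπbe o x]
      exact hπb'e (f o) (π o x)

end AQFT
end
end

section
/- Let (A,j)_K be a C*-net bundle over a pathwise connected poset K and fix o ∈ K. The map ω ↦ ω_o is a bijection from the set of states of (A,j)_K onto the set of invariant states of the holonomy dynamical system (A_o, π₁ᵒ(K), j_*), i.e. states φ of A_o with φ ∘ j_p = φ for every loop p at o. -/
noncomputable section

universe u v w u' v' w' u'' v'' w''

namespace AQFT

/-! ### Nets of C*-algebras over a poset -/

open scoped ComplexOrder

variable {K : Type u} [PartialOrder K]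

/-! ### Auxiliary lemmas for Statement 7 -/

section Aux7

variable {K : Type u} [PartialOrder K] (N : CStarNet.{u, v} K) (hN : IsCStarNetBundle N)

theorem incl_le_rfl (a : K) (x : N.fib a) : N.incl le_rfl x = x :=
  N.incl_injective (le_refl a) (by rw [N.incl_comp])

theorem hol1_apply_incl (s : Simplex1 K) (x : N.fib s.d1) :
    N.incl s.le0 (N.hol1 hN s x) = N.incl s.le1 x := by
  show N.holEquiv hN s.le0 ((N.holEquiv hN s.le0).symm (N.holEquiv hN s.le1 x)) = _
  rw [StarAlgEquiv.apply_symm_apply]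
  rfl

theorem hol1_op_hol1 (s : Simplex1 K) (x : N.fib s.d1) :
    N.hol1 hN s.op (N.hol1 hN s x) = x := by
  show (N.holEquiv hN s.le1).symm ((N.holEquiv hN s.le0)
      ((N.holEquiv hN s.le0).symm ((N.holEquiv hN s.le1) x))) = x
  rw [StarAlgEquiv.apply_symm_apply, StarAlgEquiv.symm_apply_apply]

theorem holPath_comp {a b c : K} (p : SPath K a b) (q : SPath K b c) (x : N.fib a) :
    N.holPath hN (p.comp q) x = N.holPath hN q (N.holPath hN p x) := by
  induction q with
  | nil => rfl
  | cons q s h1 h0 ih =>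
      show (((N.fibCast h1.symm).trans (N.hol1 hN s)).trans (N.fibCast h0))
          (N.holPath hN (p.comp q) x) = _
      rw [ih]; rfl

theorem holPath_reverse_apply {a b : K} (p : SPath K a b) (x : N.fib a) :
    N.holPath hN p.reverse (N.holPath hN p x) = x := by
  induction p with
  | nil => rfl
  | cons p s h1 h0 ih =>
      subst h1; subst h0
      show N.holPath hN ((SPath.single s.op rfl rfl).comp p.reverse)
          (N.hol1 hN s (N.holPath hN p x)) = x
      refine (holPath_comp N hN _ _ _).trans ?_
      show N.holPath hN p.reverse (N.hol1 hN s.op (N.hol1 hN s (N.holPath hN p x))) = x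
      rw [hol1_op_hol1]
      exact ih

theorem holPath_reverse_eq {a b : K} (p : SPath K a b) (y : N.fib b) :
    N.holPath hN p.reverse y = (N.holPath hN p).symm y := by
  have h := holPath_reverse_apply N hN p ((N.holPath hN p).symm y)
  rwa [StarAlgEquiv.apply_symm_apply] at h

theorem holPath_nervePath {o a : K} (h : o ≤ a) (x : N.fib o) :
    N.holPath hN (SPath.nervePath h) x = N.incl h x := by
  show (N.holEquiv hN (le_refl a)).symm (N.holEquiv hN h x) = N.incl h x
  apply N.incl_injective (le_refl a)
  rw [incl_le_rfl N a (N.incl h x)]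
  exact (N.holEquiv hN (le_refl a)).apply_symm_apply _

theorem state_holPath (ω : NetState N) {a b : K} (p : SPath K a b) (x : N.fib a) :
    (ω.st b).lin (N.holPath hN p x) = (ω.st a).lin x := by
  induction p with
  | nil => rfl
  | cons p s h1 h0 ih =>
      subst h1; subst h0
      show (ω.st s.d0).lin (N.hol1 hN s (N.holPath hN p x)) = _
      rw [← ω.compat s.le0, hol1_apply_incl, ω.compat s.le1, ih]

theorem cstarAlgState_ext {A : Type v} [CStarAlgebra A] {φ ψ : CStarAlgState A}
    (h : φ.lin = ψ.lin) : φ = ψ := by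
  cases φ; cases ψ; cases h; rfl

end Aux7

/-- the map `ω ↦ ω_o` is a bijection from the set of states of a C*-net
bundle onto the set of invariant states of its holonomy dynamical system. -/
theorem statement_7 {K : Type u} [PartialOrder K]
    (hconn : ∀ a b : K, Nonempty (SPath K a b)) (o : K)
    (N : CStarNet.{u, v} K) (hN : IsCStarNetBundle N) :
    (∀ (ω : NetState N) (p : SPath K o o) (x : N.fib o),
        (ω.st o).lin (N.holPath hN p x) = (ω.st o).lin x) ∧
    (∀ ω ω' : NetState N, ω.st o = ω'.st o → ω = ω') ∧
    (∀ φ : CStarAlgState (N.fib o),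
        (∀ (p : SPath K o o) (x : N.fib o), φ.lin (N.holPath hN p x) = φ.lin x) →
        ∃ ω : NetState N, ω.st o = φ) := by
  refine ⟨fun ω p x => state_holPath N hN ω p x, ?_, ?_⟩
  · intro ω ω' h
    have key : ∀ a : K, ω.st a = ω'.st a := by
      intro a
      obtain ⟨p⟩ := hconn o a
      apply cstarAlgState_ext
      ext x
      have hx : x = N.holPath hN p ((N.holPath hN p).symm x) :=
        ((N.holPath hN p).apply_symm_apply x).symm
      rw [hx, state_holPath N hN ω, state_holPath N hN ω', h]
    cases ω with | mk st compat =>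
    cases ω' with | mk st' compat' =>
    have hst : st = st' := funext key
    subst hst
    rfl
  · intro φ hφ
    have pth : ∀ a : K, SPath K o a := fun a => (hconn o a).some
    have indep : ∀ {a : K} (q r : SPath K o a) (z : N.fib a),
        φ.lin ((N.holPath hN q).symm z) = φ.lin ((N.holPath hN r).symm z) := by
      intro a q r z
      have h1 : ∀ w : N.fib o,
          φ.lin ((N.holPath hN q).symm (N.holPath hN r w)) = φ.lin w := by
        intro w
        rw [← holPath_reverse_eq N hN q, ← holPath_comp N hN r q.reverse w]
        exact hφ (r.comp q.reverse) w
      have h2 := h1 ((N.holPath hN r).symm z)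
      rwa [StarAlgEquiv.apply_symm_apply] at h2
    refine ⟨⟨fun a =>
      { lin :=
          { toFun := fun x => φ.lin ((N.holPath hN (pth a)).symm x)
            map_add' := fun x y => by rw [map_add, map_add]
            map_smul' := fun c x => by rw [map_smul, map_smul]; rfl }
        map_one := by
          show φ.lin ((N.holPath hN (pth a)).symm 1) = 1
          rw [map_one]; exact φ.map_one
        pos := fun x => by
          show (0 : ℂ) ≤ φ.lin ((N.holPath hN (pth a)).symm (star x * x))
          rw [map_mul, map_star]
          exact φ.pos _ }, ?_⟩, ?_⟩
    · intro o' a h x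
      show φ.lin ((N.holPath hN (pth a)).symm (N.incl h x))
          = φ.lin ((N.holPath hN (pth o')).symm x)
      rw [indep (pth a) ((pth o').comp (SPath.nervePath h)) (N.incl h x)]
      have hi : N.incl h x = N.holPath hN ((pth o').comp (SPath.nervePath h))
          ((N.holPath hN (pth o')).symm x) := by
        rw [holPath_comp, StarAlgEquiv.apply_symm_apply, holPath_nervePath]
      rw [hi, StarAlgEquiv.symm_apply_apply]
    · apply cstarAlgState_ext
      ext x
      show φ.lin ((N.holPath hN (pth o)).symm x) = φ.lin x
      rw [indep (pth o) (SPath.nil o) x]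
      rfl

end AQFT
end
end

section
/- Let G be an amenable group acting on a pathwise connected poset K by order-preserving bijections. Then: (i) every G-covariant C*-net bundle over K that has a state has a G-invariant state; (ii) if in addition the fundamental group π₁ᵒ(K) is amenable, then every nondegenerate G-covariant net of C*-algebras over K has a G-invariant state. -/
noncomputable section

universe u v w u' v' w' u'' v'' w''

namespace AQFT

/-! ### Nets of C*-algebras over a poset -/

open scoped ComplexOrder

variable {K : Type u} [PartialOrder K]

/-! ### Auxiliary lemmas: states on C*-algebras -/

section StateAux

variable {A : Type v''} [CStarAlgebra A] {B : Type w''} [CStarAlgebra B]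

namespace CStarAlgState

theorem im_pos_eq (ω : CStarAlgState A) (a : A) : (ω.lin (star a * a)).im = 0 :=
  ((Complex.nonneg_iff.1 (ω.pos a)).2).symm

theorem re_pos_nonneg (ω : CStarAlgState A) (a : A) : 0 ≤ (ω.lin (star a * a)).re :=
  (Complex.nonneg_iff.1 (ω.pos a)).1

theorem lin_conj (ω : CStarAlgState A) (x y : A) :
    ω.lin (star x * y) = starRingEnd ℂ (ω.lin (star y * x)) := by
  have e1 : star (x + y) * (x + y)
      = star x * x + (star x * y + star y * x) + star y * y := by
    rw [star_add]; noncomm_ring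
  have e2 : star (x + Complex.I • y) * (x + Complex.I • y)
      = star x * x + (Complex.I • (star x * y) - Complex.I • (star y * x)) + star y * y := by
    have c1 : star (Complex.I • y) = (-Complex.I) • star y := by
      rw [star_smul, Complex.star_def, Complex.conj_I]
    rw [star_add, c1, add_mul, mul_add, mul_add, mul_smul_comm, smul_mul_assoc, smul_mul_assoc,
      mul_smul_comm, smul_smul, neg_mul, Complex.I_mul_I, neg_neg, one_smul, neg_smul,
      sub_eq_add_neg]
    abel
  have h1 : (ω.lin (star x * y)).im + (ω.lin (star y * x)).im = 0 := by
    have h := ω.im_pos_eq (x + y)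
    rw [e1, map_add, map_add, map_add] at h
    simpa [Complex.add_im, ω.im_pos_eq x, ω.im_pos_eq y] using h
  have h2 : (ω.lin (star x * y)).re - (ω.lin (star y * x)).re = 0 := by
    have h := ω.im_pos_eq (x + Complex.I • y)
    rw [e2, map_add, map_add, map_sub, map_smul, map_smul] at h
    simpa [Complex.add_im, Complex.sub_im, Complex.smul_im, Complex.smul_re,
      ω.im_pos_eq x, ω.im_pos_eq y, sub_eq_add_neg] using h
  apply Complex.ext
  · simpa [Complex.conj_re] using sub_eq_zero.1 h2
  · simp only [Complex.conj_im]
    linarith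
theorem lin_star (ω : CStarAlgState A) (b : A) :
    ω.lin (star b) = starRingEnd ℂ (ω.lin b) := by
  simpa using ω.lin_conj b 1

theorem normSq_le (ω : CStarAlgState A) (b : A) :
    Complex.normSq (ω.lin b) ≤ (ω.lin (star b * b)).re := by
  set c : ℂ := ω.lin b with hc
  have e : star (b - c • 1) * (b - c • 1)
      = star b * b - c • star b - (starRingEnd ℂ c) • b + (starRingEnd ℂ c * c) • 1 := by
    rw [star_sub, star_smul, star_one, Complex.star_def, sub_mul, mul_sub, mul_sub,
      mul_smul_comm, smul_mul_assoc, smul_mul_assoc, mul_smul_comm, smul_smul, mul_one,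
      one_mul, sub_eq_add_neg, sub_eq_add_neg, sub_eq_add_neg, neg_add, neg_neg, one_mul]
    abel_nf
  have hp := ω.pos (b - c • 1)
  rw [e, map_add, map_sub, map_sub, map_smul, map_smul, map_smul, ω.map_one, ω.lin_star] at hp
  rw [Complex.nonneg_iff] at hp
  have h := hp.1
  simp only [Complex.add_re, Complex.sub_re, Complex.smul_re, smul_eq_mul, mul_one] at h
  rw [← hc] at h
  simp only [smul_eq_mul, Complex.mul_re, Complex.conj_re, Complex.conj_im,
    Complex.normSq_apply] at h ⊢
  nlinarith [h]

theorem re_star_mul_self_le (ω : CStarAlgState A) (b : A) :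
    (ω.lin (star b * b)).re ≤ ‖b‖ ^ 2 := by
  letI := CStarAlgebra.spectralOrder A
  haveI := CStarAlgebra.spectralOrderedRing A
  have hsa : IsSelfAdjoint (star b * b) := by simp [star_mul, mul_assoc]
  have h2 : star b * b ≤ algebraMap ℝ A ‖star b * b‖ :=
    IsSelfAdjoint.le_algebraMap_norm_self hsa
  have h3 : (0 : A) ≤ algebraMap ℝ A ‖star b * b‖ - star b * b := sub_nonneg.2 h2
  rw [StarOrderedRing.nonneg_iff] at h3
  have key : ∀ z : A, z ∈ AddSubmonoid.closure (Set.range fun s : A => star s * s) →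
      0 ≤ ω.lin z := by
    intro z hz
    induction hz using AddSubmonoid.closure_induction with
    | mem u hu => obtain ⟨s, rfl⟩ := hu; exact ω.pos s
    | zero => simp
    | add u v _ _ hu hv => rw [map_add]; exact add_nonneg hu hv
  have h4 := key _ h3
  have h5 : ω.lin (algebraMap ℝ A ‖star b * b‖) = (‖star b * b‖ : ℂ) := by
    rw [IsScalarTower.algebraMap_apply ℝ ℂ A, Algebra.algebraMap_eq_smul_one, map_smul,
      ω.map_one, smul_eq_mul, mul_one]
    rfl
  rw [map_sub, h5, Complex.nonneg_iff] at h4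
  have h6 := h4.1
  simp only [Complex.sub_re, Complex.ofReal_re] at h6
  have hn : ‖star b * b‖ = ‖b‖ * ‖b‖ := CStarRing.norm_star_mul_self
  nlinarith

theorem abs_lin_le (ω : CStarAlgState A) (b : A) : ‖ω.lin b‖ ≤ ‖b‖ := by
  have h1 := ω.normSq_le b
  have h2 := ω.re_star_mul_self_le b
  have h3 : ‖ω.lin b‖ ^ 2 ≤ ‖b‖ ^ 2 := by
    rw [Complex.sq_norm]; linarith
  nlinarith [norm_nonneg (ω.lin b), norm_nonneg b]

/-- Pull back a state along a unital star algebra homomorphism. -/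
def comap (ω : CStarAlgState B) (φ : A →⋆ₐ[ℂ] B) : CStarAlgState A where
  lin := ω.lin.comp φ.toAlgHom.toLinearMap
  map_one := by simp [ω.map_one]
  pos a := by simpa [map_mul, map_star] using ω.pos (φ a)

@[simp] theorem comap_lin (ω : CStarAlgState B) (φ : A →⋆ₐ[ℂ] B) (x : A) :
    (ω.comap φ).lin x = ω.lin (φ x) := rfl

end CStarAlgState

/-- Every nontrivial unital C*-algebra has a state. -/
theorem exists_cstarAlgState (A : Type v'') [CStarAlgebra A] [Nontrivial A] :
    Nonempty (CStarAlgState A) := by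
  obtain ⟨g, hg1, hgx⟩ := exists_dual_vector ℂ (1 : A) (by rw [norm_one]; exact one_ne_zero)
  have hg_one : g 1 = 1 := by rw [hgx, norm_one]; norm_num
  have him : ∀ a : A, IsSelfAdjoint a → (g a).im = 0 := by
    intro a ha
    have key : ∀ t : ℝ, (g a).re ^ 2 + ((g a).im + t) ^ 2 ≤ ‖a‖ ^ 2 + t ^ 2 := by
      intro t
      set c : ℂ := (t : ℂ) * Complex.I with hcdef
      set v : A := a + c • (1 : A) with hv
      have hcc : starRingEnd ℂ c = -c := by
        rw [hcdef, map_mul, Complex.conj_I, Complex.conj_ofReal]; ring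
      have hc2 : -c * c = ((t ^ 2 : ℝ) : ℂ) := by
        have h : -c * c = -((t : ℂ) ^ 2 * Complex.I ^ 2) := by rw [hcdef]; ring
        rw [h, Complex.I_sq]; push_cast; ring
      have hsX : star v * v = star a * a + ((t ^ 2 : ℝ) : ℂ) • 1 := by
        rw [hv, star_add, star_smul, star_one, Complex.star_def, hcc, ha.star_eq]
        rw [add_mul, mul_add, mul_add, mul_smul_comm, smul_mul_assoc, smul_mul_assoc,
          one_mul, mul_one]
        rw [one_mul, smul_smul, hc2]
        have hz : c • a + -c • a = 0 := by rw [← add_smul]; simp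
        rw [add_assoc, ← add_assoc (c • a), hz, zero_add]
      have hnv : ‖v‖ ^ 2 ≤ ‖a‖ ^ 2 + t ^ 2 := by
        have h1 : ‖star v * v‖ = ‖v‖ * ‖v‖ := CStarRing.norm_star_mul_self
        have h2 : ‖star v * v‖ ≤ ‖a‖ ^ 2 + t ^ 2 := by
          rw [hsX]
          calc ‖star a * a + ((t ^ 2 : ℝ) : ℂ) • (1:A)‖
              ≤ ‖star a * a‖ + ‖((t ^ 2 : ℝ) : ℂ) • (1:A)‖ := norm_add_le _ _
            _ ≤ ‖a‖ ^ 2 + t ^ 2 := by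
                rw [CStarRing.norm_star_mul_self, norm_smul, norm_one, mul_one]
                simp [sq]
        nlinarith [norm_nonneg v]
      have hgv : g v = g a + c := by
        rw [hv, map_add, map_smul, hg_one, smul_eq_mul, mul_one]
      have habs : ‖g v‖ ≤ ‖v‖ := by
        have := g.le_opNorm v
        rw [hg1, one_mul] at this
        simpa using this
      have h3 : ‖g v‖ ^ 2 ≤ ‖a‖ ^ 2 + t ^ 2 := by
        nlinarith [norm_nonneg (g v), norm_nonneg v]
      have h4 : ‖g v‖ ^ 2 = (g a).re ^ 2 + ((g a).im + t) ^ 2 := by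
        rw [Complex.sq_norm, Complex.normSq_apply, hgv, hcdef]
        simp [Complex.add_re, Complex.add_im, Complex.mul_re, Complex.mul_im]
        ring
      linarith [h3, h4]
    by_contra hy
    have h1 := key ((‖a‖ ^ 2 + 1 - (g a).re ^ 2 - (g a).im ^ 2) / (2 * (g a).im))
    set y := (g a).im
    have hy2 : 2 * y * ((‖a‖ ^ 2 + 1 - (g a).re ^ 2 - y ^ 2) / (2 * y))
        = ‖a‖ ^ 2 + 1 - (g a).re ^ 2 - y ^ 2 := by
      field_simp
    nlinarith [h1, sq_nonneg ((g a).re), sq_nonneg y]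
  refine ⟨⟨g.toLinearMap, hg_one, ?_⟩⟩
  intro a
  letI := CStarAlgebra.spectralOrder A
  haveI := CStarAlgebra.spectralOrderedRing A
  set b := star a * a with hb
  have hsb : IsSelfAdjoint b := by simp [hb, star_mul, mul_assoc]
  have him_b : (g b).im = 0 := him b hsb
  have h2' : b ≤ algebraMap ℝ A ‖b‖ := IsSelfAdjoint.le_algebraMap_norm_self hsb
  have hbnn : (0 : A) ≤ b := star_mul_self_nonneg a
  have h3 : (0 : A) ≤ algebraMap ℝ A ‖b‖ - b := sub_nonneg.2 h2'
  have h4 : algebraMap ℝ A ‖b‖ - b ≤ algebraMap ℝ A ‖b‖ :=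
    sub_le_self (algebraMap ℝ A ‖b‖) hbnn
  have h6 : ‖algebraMap ℝ A ‖b‖‖ = ‖b‖ := by
    rw [Algebra.algebraMap_eq_smul_one, norm_smul, norm_one, mul_one, Real.norm_eq_abs,
      abs_of_nonneg (norm_nonneg b)]
  have h5 : ‖algebraMap ℝ A ‖b‖ - b‖ ≤ ‖b‖ := by
    calc ‖algebraMap ℝ A ‖b‖ - b‖ ≤ ‖algebraMap ℝ A ‖b‖‖ :=
          CStarAlgebra.norm_le_norm_of_nonneg_of_le h3 h4
      _ = ‖b‖ := h6
  have h7 : ‖g (algebraMap ℝ A ‖b‖ - b)‖ ≤ ‖b‖ := by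
    have h := g.le_opNorm (algebraMap ℝ A ‖b‖ - b)
    rw [hg1, one_mul] at h
    exact h.trans h5
  have h8 : g (algebraMap ℝ A ‖b‖) = (‖b‖ : ℂ) := by
    rw [IsScalarTower.algebraMap_apply ℝ ℂ A, Algebra.algebraMap_eq_smul_one, map_smul,
      hg_one, smul_eq_mul, mul_one]
    rfl
  rw [map_sub, h8] at h7
  have hre : g b = ((g b).re : ℂ) := Complex.ext rfl (by simp [him_b])
  rw [hre, ← Complex.ofReal_sub] at h7
  rw [Complex.norm_real, Real.norm_eq_abs] at h7
  have h9 := (abs_le.1 h7).2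
  show (0 : ℂ) ≤ g.toLinearMap (star a * a)
  have : g.toLinearMap (star a * a) = g b := rfl
  rw [this, hre, Complex.nonneg_iff]
  constructor
  · simp only [Complex.ofReal_re]; linarith
  · simp

end StateAux

/-! ### Averaging states over an amenable group -/

section AvgAux

variable {Γ : Type u''} [Group Γ] {A : Type v''} [CStarAlgebra A]

/-- The real parts of the values of a family of states, as a bounded function. -/
def stateReF (Φ : Γ → CStarAlgState A) (x : A) : BddFuns Γ :=
  ⟨fun γ => ((Φ γ).lin x).re, ‖x‖, fun γ =>
    (Complex.abs_re_le_norm _).trans ((Φ γ).abs_lin_le x)⟩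

/-- The imaginary parts of the values of a family of states, as a bounded function. -/
def stateImF (Φ : Γ → CStarAlgState A) (x : A) : BddFuns Γ :=
  ⟨fun γ => ((Φ γ).lin x).im, ‖x‖, fun γ =>
    (Complex.abs_im_le_norm _).trans ((Φ γ).abs_lin_le x)⟩

theorem mean_const (m : RightInvariantMean Γ) (r : ℝ) : m.mean (BddFuns.const Γ r) = r := by
  have h : BddFuns.const Γ r = r • BddFuns.const Γ 1 :=
    Subtype.ext (funext fun γ => by simp [BddFuns.const])
  rw [h, map_smul, m.normalized, smul_eq_mul, mul_one]

/-- The average of a family of states over a right invariant mean. -/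
def avgState (m : RightInvariantMean Γ) (Φ : Γ → CStarAlgState A) : CStarAlgState A where
  lin :=
    { toFun := fun x => (m.mean (stateReF Φ x) : ℂ) + (m.mean (stateImF Φ x) : ℂ) * Complex.I
      map_add' := by
        intro x y
        have hre : stateReF Φ (x + y) = stateReF Φ x + stateReF Φ y :=
          Subtype.ext (funext fun γ => by simp [stateReF])
        have him : stateImF Φ (x + y) = stateImF Φ x + stateImF Φ y :=
          Subtype.ext (funext fun γ => by simp [stateImF])
        rw [hre, him, map_add, map_add]
        push_cast
        ring
      map_smul' := by
        intro c x
        have hre : stateReF Φ (c • x) = c.re • stateReF Φ x - c.im • stateImF Φ x :=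
          Subtype.ext (funext fun γ => by
            simp [stateReF, stateImF, Complex.mul_re, smul_eq_mul])
        have him : stateImF Φ (c • x) = c.re • stateImF Φ x + c.im • stateReF Φ x :=
          Subtype.ext (funext fun γ => by
            simp [stateReF, stateImF, Complex.mul_im, smul_eq_mul])
        rw [hre, him, map_sub, map_add, map_smul, map_smul, map_smul, map_smul]
        simp only [smul_eq_mul, RingHom.id_apply]
        apply Complex.ext <;>
          simp [Complex.mul_re, Complex.mul_im, Complex.add_re, Complex.add_im] }
  map_one := by
    have hre : stateReF Φ 1 = BddFuns.const Γ 1 :=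
      Subtype.ext (funext fun γ => by simp [stateReF, BddFuns.const, (Φ γ).map_one])
    have him : stateImF Φ 1 = 0 :=
      Subtype.ext (funext fun γ => by simp [stateImF, (Φ γ).map_one])
    show (m.mean (stateReF Φ 1) : ℂ) + (m.mean (stateImF Φ 1) : ℂ) * Complex.I = 1
    rw [hre, him, mean_const, map_zero]
    simp
  pos := by
    intro a
    have him : stateImF Φ (star a * a) = 0 :=
      Subtype.ext (funext fun γ => (Φ γ).im_pos_eq a)
    show (0 : ℂ) ≤ (m.mean (stateReF Φ (star a * a)) : ℂ)
        + (m.mean (stateImF Φ (star a * a)) : ℂ) * Complex.I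
    rw [him, map_zero, Complex.nonneg_iff]
    constructor
    · simpa using m.nonneg _ (fun γ => (Φ γ).re_pos_nonneg a)
    · simp

theorem avgState_lin_apply (m : RightInvariantMean Γ) (Φ : Γ → CStarAlgState A) (x : A) :
    (avgState m Φ).lin x
      = (m.mean (stateReF Φ x) : ℂ) + (m.mean (stateImF Φ x) : ℂ) * Complex.I := rfl

theorem avgState_eq {B : Type w''} [CStarAlgebra B]
    (m : RightInvariantMean Γ) (Φ : Γ → CStarAlgState A) (Φ' : Γ → CStarAlgState B) (h : Γ)
    {x : A} {y : B} (hxy : ∀ γ : Γ, (Φ' γ).lin y = (Φ (γ * h)).lin x) :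
    (avgState m Φ').lin y = (avgState m Φ).lin x := by
  have hre : stateReF Φ' y = BddFuns.rtrans (stateReF Φ x) h :=
    Subtype.ext (funext fun γ => congrArg Complex.re (hxy γ))
  have him : stateImF Φ' y = BddFuns.rtrans (stateImF Φ x) h :=
    Subtype.ext (funext fun γ => congrArg Complex.im (hxy γ))
  rw [avgState_lin_apply, avgState_lin_apply, hre, him, m.rightInv, m.rightInv]

end AvgAux

/-! ### Holonomy lemmas for C*-net bundles -/

section NetAux

variable {K : Type u} [PartialOrder K]

/-- The star algebra homomorphism underlying a star algebra equivalence. -/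
def equivHom {A : Type v''} [CStarAlgebra A] {B : Type w''} [CStarAlgebra B]
    (e : A ≃⋆ₐ[ℂ] B) : A →⋆ₐ[ℂ] B := StarAlgHomClass.toStarAlgHom e

@[simp] theorem equivHom_apply {A : Type v''} [CStarAlgebra A] {B : Type w''} [CStarAlgebra B]
    (e : A ≃⋆ₐ[ℂ] B) (x : A) : equivHom e x = e x := rfl

namespace CStarNet

theorem incl_le_rfl (N : CStarNet.{u, v''} K) (o : K) (x : N.fib o) :
    N.incl le_rfl x = x := by
  apply N.incl_injective (le_refl o)
  rw [N.incl_comp le_rfl le_rfl]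

theorem fibCast_rfl_s9 (N : CStarNet.{u, v''} K) {a : K} :
    N.fibCast (rfl : a = a) = StarAlgEquiv.refl ℂ _ := rfl

theorem fibCast_fibCast (N : CStarNet.{u, v''} K) {a b : K} (h : a = b) (x : N.fib b) :
    N.fibCast h (N.fibCast h.symm x) = x := by subst h; rfl

theorem fibCast_symm_fibCast (N : CStarNet.{u, v''} K) {a b : K} (h : a = b) (x : N.fib a) :
    N.fibCast h.symm (N.fibCast h x) = x := by subst h; rfl

variable {N : CStarNet.{u, v''} K} (hN : IsCStarNetBundle N)

theorem holEquiv_apply_s9 {a o : K} (h : a ≤ o) (x : N.fib a) :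
    N.holEquiv hN h x = N.incl h x := rfl

theorem hol1_incl (s : Simplex1 K) (h0 : s.d0 ≤ s.supp) (h1 : s.d1 ≤ s.supp) (x : N.fib s.d1) :
    N.incl h0 (N.hol1 hN s x) = N.incl h1 x := by
  show N.holEquiv hN s.le0 (N.hol1 hN s x) = N.holEquiv hN s.le1 x
  show N.holEquiv hN s.le0 ((N.holEquiv hN s.le0).symm (N.holEquiv hN s.le1 x))
    = N.holEquiv hN s.le1 x
  rw [StarAlgEquiv.apply_symm_apply]

theorem incl_hol1 (s : Simplex1 K) {t : K} (h0t : s.d0 ≤ t) (h1t : s.d1 ≤ t)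
    (hst : s.supp ≤ t) (x : N.fib s.d1) :
    N.incl h0t (N.hol1 hN s x) = N.incl h1t x := by
  calc N.incl h0t (N.hol1 hN s x)
      = N.incl hst (N.incl s.le0 (N.hol1 hN s x)) := (N.incl_comp _ _ _).symm
    _ = N.incl hst (N.incl s.le1 x) := by rw [hol1_incl hN s s.le0 s.le1 x]
    _ = N.incl h1t x := N.incl_comp _ _ _

theorem hol1_op_cancel (s : Simplex1 K) (x : N.fib s.d0) :
    N.hol1 hN s (N.hol1 hN s.op x) = x := by
  show (N.holEquiv hN s.le0).symm (N.holEquiv hN s.le1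
    ((N.holEquiv hN s.le1).symm (N.holEquiv hN s.le0 x))) = x
  rw [StarAlgEquiv.apply_symm_apply, StarAlgEquiv.symm_apply_apply]

theorem holPath_comp_apply {a b c : K} (p : SPath K a b) (q : SPath K b c) (x : N.fib a) :
    N.holPath hN (p.comp q) x = N.holPath hN q (N.holPath hN p x) := by
  induction q with
  | nil => rfl
  | cons q s h1 h0 ih =>
      show N.holPath hN (.cons (p.comp q) s h1 h0) x = _
      simp only [CStarNet.holPath, StarAlgEquiv.trans_apply, ih]

theorem holPath_reverse {a b : K} (p : SPath K a b) :
    N.holPath hN p.reverse = (N.holPath hN p).symm := by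
  induction p with
  | nil => exact StarAlgEquiv.ext fun x => rfl
  | cons p s h1 h0 ih =>
      refine StarAlgEquiv.ext fun x => ?_
      show N.holPath hN ((SPath.single s.op h0 h1).comp p.reverse) x = _
      rw [holPath_comp_apply hN, ih]
      apply EquivLike.injective (N.holPath hN (SPath.cons p s h1 h0))
      rw [StarAlgEquiv.apply_symm_apply]
      show (N.fibCast h0) (N.hol1 hN s ((N.fibCast h1.symm)
        ((N.holPath hN p) ((N.holPath hN p).symm
          (N.holPath hN (SPath.single s.op h0 h1) x))))) = x
      rw [StarAlgEquiv.apply_symm_apply]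
      show (N.fibCast h0) (N.hol1 hN s ((N.fibCast h1.symm)
        ((N.fibCast h1) (N.hol1 hN s.op ((N.fibCast h0.symm) x))))) = x
      exact (congrArg (fun z => N.fibCast h0 (N.hol1 hN s z)) (N.fibCast_symm_fibCast h1 _)).trans
        ((congrArg (N.fibCast h0) (hol1_op_cancel hN s _)).trans (N.fibCast_fibCast h0 x))

theorem holPath_homotopic {a b : K} {p q : SPath K a b} (h : SPath.Homotopic p q) :
    N.holPath hN p = N.holPath hN q := by
  induction h with
  | refl p => rfl
  | symm _ ih => exact ih.symm
  | trans _ _ ih1 ih2 => exact ih1.trans ih2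
  | comp_congr _ _ ih1 ih2 =>
      refine StarAlgEquiv.ext fun x => ?_
      rw [holPath_comp_apply hN, holPath_comp_apply hN, ih1, ih2]
  | degen s h0 h1 hs =>
      obtain ⟨ssupp, sd0, sd1, sle0, sle1⟩ := s
      dsimp at h0 h1 hs
      subst h0; subst h1; subst hs
      refine StarAlgEquiv.ext fun x => ?_
      show x = (N.holEquiv hN sle0).symm (N.holEquiv hN sle0 x)
      rw [StarAlgEquiv.symm_apply_apply]
  | triangle c h1 h0 =>
      obtain ⟨csupp, d0, d1, d2, le0, le1, le2, h00, h11, h10⟩ := c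
      obtain ⟨s0, x0, y0, l00, l01⟩ := d0
      obtain ⟨s1, x1, y1, l10, l11⟩ := d1
      obtain ⟨s2, x2, y2, l20, l21⟩ := d2
      dsimp at h00 h11 h10 h1 h0 le0 le1 le2
      subst h00; subst h11; subst h10; subst h1; subst h0
      refine StarAlgEquiv.ext fun x => ?_
      apply N.incl_injective (l00.trans le0)
      show N.incl (l00.trans le0) (N.hol1 hN ⟨s0, x0, y0, l00, l01⟩
          (N.hol1 hN ⟨s2, y0, y1, l20, l21⟩ x))
        = N.incl (l00.trans le0) (N.hol1 hN ⟨s1, x0, y1, l10, l11⟩ x)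
      calc N.incl (l00.trans le0) (N.hol1 hN ⟨s0, x0, y0, l00, l01⟩
              (N.hol1 hN ⟨s2, y0, y1, l20, l21⟩ x))
          = N.incl (l01.trans le0) (N.hol1 hN ⟨s2, y0, y1, l20, l21⟩ x) :=
            incl_hol1 hN ⟨s0, x0, y0, l00, l01⟩ (l00.trans le0) (l01.trans le0) le0 _
        _ = N.incl (l21.trans le2) x :=
            incl_hol1 hN ⟨s2, y0, y1, l20, l21⟩ (l01.trans le0) (l21.trans le2) le2 x
        _ = N.incl (l00.trans le0) (N.hol1 hN ⟨s1, x0, y1, l10, l11⟩ x) :=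
            (incl_hol1 hN ⟨s1, x0, y1, l10, l11⟩ (l00.trans le0) (l21.trans le2) le1 x).symm

theorem holPath_nerve {a b : K} (h : a ≤ b) (x : N.fib a) :
    N.holPath hN (SPath.nervePath h) x = N.incl h x := by
  show (N.holEquiv hN (le_refl b)).symm (N.holEquiv hN h x) = N.incl h x
  apply EquivLike.injective (N.holEquiv hN (le_refl b))
  rw [StarAlgEquiv.apply_symm_apply]
  show N.incl h x = N.incl (le_refl b) (N.incl h x)
  rw [N.incl_le_rfl]

end CStarNet

theorem NetState.lin_fibCast {N : CStarNet.{u, v''} K} (ω : NetState N) {a b : K}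
    (h : a = b) (x : N.fib a) : (ω.st b).lin (N.fibCast h x) = (ω.st a).lin x := by
  subst h; rfl

/-- Averaging a state of a `G`-covariant net over a right invariant mean on `G`
produces a `G`-invariant state. -/
theorem invariant_of_state {G : Type w''} [Group G] [MulAction G K]
    {hord : ∀ (g : G) (a b : K), a ≤ b → g • a ≤ g • b} (m : RightInvariantMean G)
    (N : CStarNet.{u, v''} K) (α : CovariantNet hord N) (ω : NetState N) :
    ∃ ω' : NetState N, ω'.Invariant α := by
  classical
  set Φ : ∀ o : K, G → CStarAlgState (N.fib o) :=
    fun o γ => (ω.st (γ • o)).comap (equivHom (α.act γ o)) with hΦ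
  have hΦ_lin : ∀ (o : K) (γ : G) (x : N.fib o),
      (Φ o γ).lin x = (ω.st (γ • o)).lin (α.act γ o x) := fun o γ x => rfl
  refine ⟨⟨fun o => avgState m (Φ o), ?_⟩, ?_⟩
  · intro o a h x
    refine avgState_eq m (Φ o) (Φ a) 1 ?_
    intro γ
    rw [hΦ_lin, hΦ_lin, mul_one, α.act_incl γ h x]
    exact ω.compat (hord γ o a h) (α.act γ o x)
  · intro g o x
    refine avgState_eq m (Φ o) (Φ (g • o)) g ?_
    intro γ
    rw [hΦ_lin, hΦ_lin, ← α.act_mul g γ o x]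
    exact ω.lin_fibCast (mul_smul γ g o) (α.act (γ * g) o x)

end NetAux

/-- for an amenable symmetry group `G` of the poset: (i) every
`G`-covariant C*-net bundle having a state has a `G`-invariant state; (ii) if in
addition the fundamental group of the poset is amenable, every nondegenerate
`G`-covariant net of C*-algebras has a `G`-invariant state. -/
theorem statement_9 {K : Type u} [PartialOrder K] {G : Type w} [Group G] [MulAction G K]
    (hconn : ∀ a b : K, Nonempty (SPath K a b)) (o : K)
    (hord : ∀ (g : G) (a b : K), a ≤ b → g • a ≤ g • b)
    (hamG : IsAmenable G) :
    (∀ (N : CStarNet.{u, v} K), IsCStarNetBundle N → ∀ α : CovariantNet hord N,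
       Nonempty (NetState N) → ∃ ω : NetState N, ω.Invariant α) ∧
    (IsAmenable (Pi1 K o) →
      ∀ (N : CStarNet.{u, v} K) (α : CovariantNet hord N)
        (NB : CStarNet.{u, max u v} K) (ε : ∀ o', N.fib o' →⋆ₐ[ℂ] NB.fib o'),
        IsEnvelope N NB ε → IsNondegenerate NB →
        ∃ ω : NetState N, ω.Invariant α) := by
  obtain ⟨m⟩ := hamG
  constructor
  · rintro N - α ⟨ω⟩
    exact invariant_of_state m N α ω
  · rintro ⟨mP⟩ N α NB ε ⟨hNB, hε, -⟩ hnd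
    haveI := hnd o
    obtain ⟨ψ₀⟩ := exists_cstarAlgState (NB.fib o)
    set Φp : Pi1 K o → CStarAlgState (NB.fib o) :=
      fun γ => Quotient.lift (fun p : SPath K o o => ψ₀.comap (equivHom (NB.holPath hNB p)))
        (fun p q hpq => by rw [CStarNet.holPath_homotopic hNB hpq]) γ with hΦp
    have hΦp_mk : ∀ p : SPath K o o,
        Φp (Pi1.mk p) = ψ₀.comap (equivHom (NB.holPath hNB p)) := fun p => rfl
    have hinv : ∀ (q : SPath K o o) (x : NB.fib o),
        (avgState mP Φp).lin (NB.holPath hNB q x) = (avgState mP Φp).lin x := by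
      intro q x
      refine avgState_eq mP Φp Φp (Pi1.mk q) ?_
      intro γ
      induction γ using Quotient.inductionOn with
      | h p =>
        show (Φp (Pi1.mk p)).lin (NB.holPath hNB q x) = (Φp (Pi1.mk p * Pi1.mk q)).lin x
        have hmul : Pi1.mk p * Pi1.mk q = Pi1.mk (q.comp p) := rfl
        rw [hmul, hΦp_mk, hΦp_mk]
        simp only [CStarAlgState.comap_lin, equivHom_apply]
        rw [CStarNet.holPath_comp_apply hNB]
    set ψ : CStarAlgState (NB.fib o) := avgState mP Φp with hψ
    set pa : ∀ a : K, SPath K o a := fun a => (hconn o a).some with hpadef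
    have hcompat : ∀ ⦃b a : K⦄ (h : b ≤ a) (x : NB.fib b),
        ψ.lin (NB.holPath hNB (pa a).reverse (NB.incl h x))
          = ψ.lin (NB.holPath hNB (pa b).reverse x) := by
      intro b a h x
      have hL := hinv ((pa a).comp (((SPath.nervePath h).reverse).comp (pa b).reverse))
        (NB.holPath hNB (pa a).reverse (NB.incl h x))
      rw [CStarNet.holPath_comp_apply hNB, CStarNet.holPath_comp_apply hNB,
        CStarNet.holPath_reverse hNB (pa a), StarAlgEquiv.apply_symm_apply,
        CStarNet.holPath_reverse hNB (SPath.nervePath h)] at hL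
      have hn : NB.incl h x = NB.holPath hNB (SPath.nervePath h) x :=
        (CStarNet.holPath_nerve hNB h x).symm
      rw [hn, StarAlgEquiv.symm_apply_apply] at hL
      rw [CStarNet.holPath_reverse hNB (pa a), hn]
      exact hL.symm
    have ωNB : NetState NB := by
      refine ⟨fun a => ψ.comap (equivHom (NB.holPath hNB (pa a).reverse)), ?_⟩
      intro b a h x
      simpa only [CStarAlgState.comap_lin, equivHom_apply] using hcompat h x
    have ωN : NetState N := by
      refine ⟨fun a => (ωNB.st a).comap (ε a), ?_⟩
      intro b a h x
      show (ωNB.st a).lin (ε a (N.incl h x)) = (ωNB.st b).lin (ε b x)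
      rw [hε h x]
      exact ωNB.compat h (ε b x)
    exact invariant_of_state m N α ωN

end AQFT
end
end
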